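/- arXiv:1606.04086 — 7 statements merged into one kernel-verified Lean document; each statement's English description precedes it below -/
import Mathlib

section
/- Suppose σ_g² = σ² > 0 for all g (homoskedasticity). Let B_1, …, B_G be independent real Gaussian random variables with B_g distributed as N(0, π_g σ²), let d_1, …, d_G be real constants, and define W_g = (e₁ᵀQ⁻¹m_g)·( B_g − π_g m_gᵀQ⁻¹ Σ_{j=1}^G m_j B_j + π_g d_g ). Then Σ_{g=1}^G ω_g > 0, and ( E[ Σ_{g=1}^G W_g² ] − σ² Σ_{g=1}^G ω_g ) / ( σ² Σ_{g=1}^G ω_g ) = ( Σ_{g=1}^G d_g² π_g ω_g ) / ( σ² Σ_{g=1}^G ω_g ) − ( Σ_{g=1}^G m_gᵀQ⁻¹m_g · π_g ω_g ) / ( Σ_{g=1}^G ω_g ). -/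
open MeasureTheory ProbabilityTheory Matrix Finset

open scoped NNReal ENNReal

namespace CRVAux
open Real

lemma integrable_sq_exp {b : ℝ} (hb : 0 < b) :
    Integrable (fun x : ℝ => x ^ 2 * Real.exp (-b * x ^ 2)) := by
  have h2 : (0 : ℝ) < b / 2 := by linarith
  have hint : Integrable (fun x : ℝ => (2 / b) * Real.exp (-(b/2) * x ^ 2)) :=
    (integrable_exp_neg_mul_sq h2).const_mul _
  refine hint.mono' ?_ ?_
  · exact (continuous_pow 2).aestronglyMeasurable.mul
      (Real.continuous_exp.comp (by continuity)).aestronglyMeasurable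
  · filter_upwards with x
    have h0 : b/2 * x ^ 2 ≤ Real.exp ((b/2) * x ^ 2) := by
      have := Real.add_one_le_exp ((b/2) * x ^ 2)
      nlinarith
    have h1 : x ^ 2 ≤ (2 / b) * Real.exp ((b/2) * x ^ 2) :=
      calc x ^ 2 = (2/b) * (b/2 * x ^ 2) := by field_simp
        _ ≤ (2/b) * Real.exp ((b/2) * x ^ 2) :=
            mul_le_mul_of_nonneg_left h0 (by positivity)
    rw [Real.norm_eq_abs, abs_of_nonneg (by positivity)]
    calc x ^ 2 * Real.exp (-b * x ^ 2)
        ≤ ((2 / b) * Real.exp ((b/2) * x ^ 2)) * Real.exp (-b * x ^ 2) := by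
          exact mul_le_mul_of_nonneg_right h1 (Real.exp_pos _).le
      _ = (2 / b) * Real.exp (-(b/2) * x ^ 2) := by
          rw [mul_assoc, ← Real.exp_add]; ring_nf

lemma integral_sq_exp {b : ℝ} (hb : 0 < b) :
    ∫ x : ℝ, x ^ 2 * Real.exp (-b * x ^ 2) = (2 * b)⁻¹ * Real.sqrt (π / b) := by
  have hb' : (2 : ℝ) * b ≠ 0 := by positivity
  set F : ℝ → ℝ := fun x => -(2 * b)⁻¹ * (x * Real.exp (-b * x ^ 2)) with hF
  have hderiv : ∀ x : ℝ, HasDerivAt F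
      (x ^ 2 * Real.exp (-b * x ^ 2) - (2 * b)⁻¹ * Real.exp (-b * x ^ 2)) x := by
    intro x
    have h1 : HasDerivAt (fun x : ℝ => -b * x ^ 2) (-b * (2 * x)) x := by
      simpa using ((hasDerivAt_pow 2 x).const_mul (-b))
    have h2 : HasDerivAt (fun x : ℝ => Real.exp (-b * x ^ 2))
        (Real.exp (-b * x ^ 2) * (-b * (2 * x))) x := h1.exp
    have h3 : HasDerivAt (fun x : ℝ => x * Real.exp (-b * x ^ 2))
        (1 * Real.exp (-b * x ^ 2) + x * (Real.exp (-b * x ^ 2) * (-b * (2 * x)))) x :=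
      (hasDerivAt_id x).mul h2
    have h4 := h3.const_mul (-(2 * b)⁻¹)
    refine h4.congr_deriv ?_
    field_simp
    ring
  have hint1 : Integrable (fun x : ℝ => Real.exp (-b * x ^ 2)) := integrable_exp_neg_mul_sq hb
  have hint2 := integrable_sq_exp hb
  have hintF : Integrable F := ((integrable_mul_exp_neg_mul_sq hb).const_mul _)
  have hint' : Integrable (fun x : ℝ =>
      x ^ 2 * Real.exp (-b * x ^ 2) - (2 * b)⁻¹ * Real.exp (-b * x ^ 2)) :=
    hint2.sub (hint1.const_mul _)
  have hzero := integral_eq_zero_of_hasDerivAt_of_integrable hderiv hint' hintF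
  rw [integral_sub hint2 (hint1.const_mul _), integral_const_mul, integral_gaussian] at hzero
  linarith

lemma integral_lin_exp {b : ℝ} (hb : 0 < b) :
    ∫ x : ℝ, x * Real.exp (-b * x ^ 2) = 0 := by
  set F : ℝ → ℝ := fun x => -(2 * b)⁻¹ * Real.exp (-b * x ^ 2) with hF
  have hderiv : ∀ x : ℝ, HasDerivAt F (x * Real.exp (-b * x ^ 2)) x := by
    intro x
    have h1 : HasDerivAt (fun x : ℝ => -b * x ^ 2) (-b * (2 * x)) x := by
      simpa using ((hasDerivAt_pow 2 x).const_mul (-b))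
    have h2 := (h1.exp).const_mul (-(2 * b)⁻¹)
    refine h2.congr_deriv ?_
    field_simp
  have hintF : Integrable F := (integrable_exp_neg_mul_sq hb).const_mul _
  exact integral_eq_zero_of_hasDerivAt_of_integrable hderiv
    (integrable_mul_exp_neg_mul_sq hb) hintF


lemma pdf_eq {v : ℝ≥0} (hv : v ≠ 0) (x : ℝ) :
    gaussianPDFReal 0 v x
      = (Real.sqrt (2 * π * v))⁻¹ * Real.exp (-(2 * (v : ℝ))⁻¹ * x ^ 2) := by
  have harg : -(x - 0) ^ 2 / (2 * (v : ℝ)) = -(2 * (v : ℝ))⁻¹ * x ^ 2 := by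
    rw [sub_zero]; ring
  simp only [gaussianPDFReal]
  rw [harg]

lemma gaussianPDF_eq_coe (μr : ℝ) (v : ℝ≥0) :
    gaussianPDF μr v = fun x => ((gaussianPDFReal μr v x).toNNReal : ℝ≥0∞) := rfl

lemma integral_fun_gaussian {v : ℝ≥0} (hv : v ≠ 0) (f : ℝ → ℝ) :
    ∫ x, f x ∂(gaussianReal 0 v) = ∫ x, gaussianPDFReal 0 v x * f x := by
  rw [gaussianReal_of_var_ne_zero _ hv]
  have hmeas : Measurable fun x => (gaussianPDFReal 0 v x).toNNReal :=
    (measurable_gaussianPDFReal 0 v).real_toNNReal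
  rw [gaussianPDF_eq_coe, integral_withDensity_eq_integral_smul hmeas]
  congr 1; funext x
  rw [NNReal.smul_def, smul_eq_mul, Real.coe_toNNReal _ (gaussianPDFReal_nonneg 0 v x)]

lemma integrable_gaussian_iff {v : ℝ≥0} (hv : v ≠ 0) (f : ℝ → ℝ) :
    Integrable f (gaussianReal 0 v)
      ↔ Integrable (fun x => gaussianPDFReal 0 v x * f x) := by
  rw [gaussianReal_of_var_ne_zero _ hv]
  have hmeas : Measurable fun x => (gaussianPDFReal 0 v x).toNNReal :=
    (measurable_gaussianPDFReal 0 v).real_toNNReal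
  rw [gaussianPDF_eq_coe, integrable_withDensity_iff_integrable_smul hmeas]
  constructor <;> intro h <;> refine h.congr (Filter.Eventually.of_forall fun x => ?_) <;>
    simp only [NNReal.smul_def, smul_eq_mul,
      Real.coe_toNNReal _ (gaussianPDFReal_nonneg 0 v x)]

lemma vpos {v : ℝ≥0} (hv : v ≠ 0) : 0 < (v : ℝ) := by
  exact_mod_cast lt_of_le_of_ne (zero_le : (0:ℝ≥0) ≤ v) (Ne.symm hv)

lemma integral_id_gaussian {v : ℝ≥0} (hv : v ≠ 0) :
    ∫ x, x ∂(gaussianReal 0 v) = 0 := by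
  have hb : (0 : ℝ) < (2 * (v : ℝ))⁻¹ := by
    have := vpos hv; positivity
  rw [integral_fun_gaussian hv]
  calc ∫ x, gaussianPDFReal 0 v x * x
      = ∫ x, (Real.sqrt (2 * π * v))⁻¹ * (x * Real.exp (-(2 * (v : ℝ))⁻¹ * x ^ 2)) := by
        congr 1; funext x; rw [pdf_eq hv]; ring
    _ = (Real.sqrt (2 * π * v))⁻¹ * ∫ x, x * Real.exp (-(2 * (v : ℝ))⁻¹ * x ^ 2) :=
        integral_const_mul _ _
    _ = 0 := by rw [integral_lin_exp hb, mul_zero]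

lemma integral_sq_gaussian {v : ℝ≥0} (hv : v ≠ 0) :
    ∫ x, x ^ 2 ∂(gaussianReal 0 v) = v := by
  have hv' := vpos hv
  have hb : (0 : ℝ) < (2 * (v : ℝ))⁻¹ := by positivity
  have hsq : (0:ℝ) < Real.sqrt (2 * π * v) := Real.sqrt_pos.mpr (by positivity)
  rw [integral_fun_gaussian hv]
  calc ∫ x, gaussianPDFReal 0 v x * x ^ 2
      = ∫ x, (Real.sqrt (2 * π * v))⁻¹ * (x ^ 2 * Real.exp (-(2 * (v : ℝ))⁻¹ * x ^ 2)) := by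
        congr 1; funext x; rw [pdf_eq hv]; ring
    _ = (Real.sqrt (2 * π * v))⁻¹ * ∫ x, x ^ 2 * Real.exp (-(2 * (v : ℝ))⁻¹ * x ^ 2) :=
        integral_const_mul _ _
    _ = (Real.sqrt (2 * π * v))⁻¹ * ((v : ℝ) * Real.sqrt (2 * π * v)) := by
        rw [integral_sq_exp hb]
        congr 2
        · field_simp
        · congr 1; field_simp
    _ = v := by field_simp [mul_comm]

lemma memLp_two_id_gaussian {v : ℝ≥0} (hv : v ≠ 0) :
    MemLp (id : ℝ → ℝ) 2 (gaussianReal 0 v) := by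
  have hv' := vpos hv
  have hb : (0 : ℝ) < (2 * (v : ℝ))⁻¹ := by positivity
  rw [memLp_two_iff_integrable_sq aestronglyMeasurable_id]
  rw [integrable_gaussian_iff hv]
  have heq : (fun x => gaussianPDFReal 0 v x * (id x) ^ 2)
      = fun x => (Real.sqrt (2 * π * v))⁻¹ * (x ^ 2 * Real.exp (-(2 * (v : ℝ))⁻¹ * x ^ 2)) :=
    funext fun x => by rw [pdf_eq hv]; simp only [id]; ring
  rw [heq]
  exact (integrable_sq_exp hb).const_mul _


end CRVAux

/-- Homoskedastic decomposition (Equation (10) of the paper) of the relative expected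
difference between the large-sample limit of the cluster-robust variance estimator and
the asymptotic variance of the RD estimator. -/
theorem crv_homoskedastic_relative_decomposition
    {Ω : Type*} [MeasureSpace Ω] [IsProbabilityMeasure (ℙ : Measure Ω)]
    (k G : ℕ) (hk : 0 < k) (hG : 0 < G)
    (m : Fin G → Fin k → ℝ) (π d : Fin G → ℝ)
    (hπ : ∀ g, 0 < π g) (hπ1 : ∑ g, π g = 1)
    (σ2 : ℝ) (hσ2 : 0 < σ2)
    (Q : Matrix (Fin k) (Fin k) ℝ)
    (hQ : Q = ∑ g, π g • vecMulVec (m g) (m g))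
    (hQinv : IsUnit Q.det)
    (e1 : Fin k → ℝ) (he1 : e1 = Pi.single ⟨0, hk⟩ 1)
    (ω : Fin G → ℝ)
    (hω : ∀ g, ω g = e1 ⬝ᵥ ((Q⁻¹ * (π g • vecMulVec (m g) (m g)) * Q⁻¹) *ᵥ e1))
    (B : Fin G → Ω → ℝ)
    (hBmeas : ∀ g, Measurable (B g))
    (hBindep : iIndepFun B ℙ)
    (hBlaw : ∀ g, Measure.map (B g) ℙ = gaussianReal 0 (Real.toNNReal (π g * σ2)))
    (W : Fin G → Ω → ℝ)
    (hW : ∀ g ω', W g ω' = (e1 ⬝ᵥ (Q⁻¹ *ᵥ m g)) *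
      (B g ω' - π g * (m g ⬝ᵥ (Q⁻¹ *ᵥ (∑ j, B j ω' • m j))) + π g * d g)) :
    0 < ∑ g, ω g ∧
    ((∫ ω', ∑ g, (W g ω') ^ 2 ∂ℙ) - σ2 * ∑ g, ω g) / (σ2 * ∑ g, ω g)
      = (∑ g, (d g) ^ 2 * π g * ω g) / (σ2 * ∑ g, ω g)
        - (∑ g, (m g ⬝ᵥ (Q⁻¹ *ᵥ m g)) * (π g * ω g)) / (∑ g, ω g) := by
  -- abbreviations
  set c : Fin G → ℝ := fun g => e1 ⬝ᵥ (Q⁻¹ *ᵥ m g) with hc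
  set s : Fin G → Fin G → ℝ := fun g j => m g ⬝ᵥ (Q⁻¹ *ᵥ m j) with hs
  -- symmetry of Q
  have hQsym : Qᵀ = Q := by
    rw [hQ]
    ext i j
    simp only [Matrix.transpose_apply, Matrix.sum_apply, Matrix.smul_apply,
      vecMulVec_apply, smul_eq_mul]
    exact Finset.sum_congr rfl fun g _ => by ring
  have hQisym : Q⁻¹ᵀ = Q⁻¹ := by
    rw [Matrix.transpose_nonsing_inv, hQsym]
  have hdot : ∀ a b : Fin k → ℝ, a ⬝ᵥ (Q⁻¹ *ᵥ b) = b ⬝ᵥ (Q⁻¹ *ᵥ a) := by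
    intro a b
    rw [Matrix.dotProduct_mulVec]
    conv_lhs => rw [← hQisym]
    rw [Matrix.vecMul_transpose, dotProduct_comm]
  have hQmul : ∀ w : Fin k → ℝ, Q *ᵥ w = ∑ g, (π g * (m g ⬝ᵥ w)) • m g := by
    intro w
    funext i
    rw [hQ]
    simp only [Matrix.mulVec, dotProduct, Matrix.sum_apply, Matrix.smul_apply,
      vecMulVec_apply, smul_eq_mul, Finset.sum_apply, Pi.smul_apply, Finset.sum_mul]
    rw [Finset.sum_comm]
    refine Finset.sum_congr rfl fun g _ => ?_
    rw [Finset.mul_sum, Finset.sum_mul]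
    refine Finset.sum_congr rfl fun j _ => by ring
  have hQQinv : ∀ w : Fin k → ℝ, Q *ᵥ (Q⁻¹ *ᵥ w) = w := by
    intro w
    rw [Matrix.mulVec_mulVec, Matrix.mul_nonsing_inv _ hQinv, Matrix.one_mulVec]
  have hssym : ∀ g j, s g j = s j g := fun g j => hdot (m g) (m j)
  have hsumdot : ∀ (F : Fin G → Fin k → ℝ) (w : Fin k → ℝ),
      (∑ j, F j) ⬝ᵥ w = ∑ j, F j ⬝ᵥ w := by
    intro F w
    simp only [dotProduct, Finset.sum_apply, Finset.sum_mul]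
    exact Finset.sum_comm
  -- key identity
  have hkey : ∀ g, ∑ j, π j * (s g j) ^ 2 = s g g := by
    intro g
    have h1 : ∑ j, (π j * (m j ⬝ᵥ (Q⁻¹ *ᵥ m g))) • m j = m g := by
      rw [← hQmul]; exact hQQinv (m g)
    calc ∑ j, π j * (s g j) ^ 2
        = (∑ j, (π j * (m j ⬝ᵥ (Q⁻¹ *ᵥ m g))) • m j) ⬝ᵥ (Q⁻¹ *ᵥ m g) := by
          rw [hsumdot]
          refine Finset.sum_congr rfl fun j _ => ?_
          rw [smul_dotProduct, smul_eq_mul]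
          have hgj : m j ⬝ᵥ (Q⁻¹ *ᵥ m g) = s g j := (hssym g j).symm
          rw [hgj]; ring
      _ = s g g := by rw [h1]
  -- vecMulVec action
  have hvmv : ∀ (a b w : Fin k → ℝ), vecMulVec a b *ᵥ w = (b ⬝ᵥ w) • a := by
    intro a b w
    funext i
    simp only [Matrix.mulVec, dotProduct, vecMulVec_apply, Pi.smul_apply, smul_eq_mul]
    rw [Finset.sum_mul]
    refine Finset.sum_congr rfl fun j _ => by ring
  -- ω in terms of c
  have hωc : ∀ g, ω g = π g * (c g) ^ 2 := by
    intro g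
    rw [hω g, ← Matrix.mulVec_mulVec, ← Matrix.mulVec_mulVec, smul_mulVec, hvmv,
      hdot (m g) e1]
    simp only [Matrix.mulVec_smul, dotProduct_smul, smul_eq_mul]
    show π g * (c g * c g) = π g * c g ^ 2
    ring
  -- positivity
  have hωnn : ∀ g, 0 ≤ ω g := fun g => by
    rw [hωc g]; exact mul_nonneg (hπ g).le (sq_nonneg _)
  have hex : ∃ g, c g ≠ 0 := by
    by_contra hno
    push_neg at hno
    have h1 : ∑ g, (π g * (m g ⬝ᵥ (Q⁻¹ *ᵥ e1))) • m g = e1 := by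
      rw [← hQmul]; exact hQQinv e1
    have hz : ∀ g : Fin G, (π g * (m g ⬝ᵥ (Q⁻¹ *ᵥ e1))) • m g = 0 := by
      intro g
      rw [hdot (m g) e1]
      show (π g * c g) • m g = 0
      rw [hno g]
      simp
    rw [Finset.sum_congr rfl fun g _ => hz g, Finset.sum_const, smul_zero] at h1
    have := congrFun h1 ⟨0, hk⟩
    rw [he1] at this
    simp [Pi.single_eq_same] at this
  have hpos : 0 < ∑ g, ω g := by
    obtain ⟨g0, hg0⟩ := hex
    refine Finset.sum_pos' (fun g _ => hωnn g) ⟨g0, Finset.mem_univ _, ?_⟩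
    rw [hωc]
    exact mul_pos (hπ g0) (lt_of_le_of_ne (sq_nonneg _) (Ne.symm (pow_ne_zero 2 hg0)))
  refine ⟨hpos, ?_⟩

  -- coefficients of the linear representation
  set t : Fin G → Fin G → ℝ := fun g j => c g * ((if j = g then 1 else 0) - π g * s g j)
    with ht
  set u : Fin G → ℝ := fun g => c g * (π g * d g) with hu
  have hvne : ∀ g : Fin G, (Real.toNNReal (π g * σ2)) ≠ 0 := by
    intro g
    rw [Ne, Real.toNNReal_eq_zero, not_le]
    exact mul_pos (hπ g) hσ2
  have hvco : ∀ g : Fin G, ((Real.toNNReal (π g * σ2) : ℝ≥0) : ℝ) = π g * σ2 := fun g =>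
    Real.coe_toNNReal _ (mul_pos (hπ g) hσ2).le
  have hL2 : ∀ g, MemLp (B g) 2 ℙ := by
    intro g
    have h1 := CRVAux.memLp_two_id_gaussian (hvne g)
    rw [← hBlaw g] at h1
    exact (memLp_map_measure_iff aestronglyMeasurable_id (hBmeas g).aemeasurable).1 h1
  have hBint : ∀ g, Integrable (B g) ℙ := fun g => (hL2 g).integrable one_le_two
  have hmean : ∀ g, ∫ ω', B g ω' ∂ℙ = 0 := by
    intro g
    have h1 : ∫ x, x ∂(Measure.map (B g) ℙ) = ∫ ω', B g ω' ∂ℙ :=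
      integral_map (hBmeas g).aemeasurable aestronglyMeasurable_id
    rw [← h1, hBlaw g]
    exact CRVAux.integral_id_gaussian (hvne g)
  have hvar : ∀ g, ∫ ω', (B g ω') ^ 2 ∂ℙ = π g * σ2 := by
    intro g
    have h1 : ∫ x, x ^ 2 ∂(Measure.map (B g) ℙ) = ∫ ω', (B g ω') ^ 2 ∂ℙ :=
      integral_map (hBmeas g).aemeasurable (continuous_pow 2).aestronglyMeasurable
    rw [← h1, hBlaw g, CRVAux.integral_sq_gaussian (hvne g), hvco g]
  have hmul : ∀ i j : Fin G, Integrable (fun ω' => B i ω' * B j ω') ℙ := by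
    intro i j
    have h1 : MemLp (B i • B j : Ω → ℝ) 1 ℙ :=
      MemLp.smul (hL2 j) (hL2 i)
    have h2 := h1.integrable le_rfl
    exact h2.congr (Filter.Eventually.of_forall fun x => rfl)
  have hBB : ∀ i j : Fin G, ∫ ω', B i ω' * B j ω' ∂ℙ = if i = j then π i * σ2 else 0 := by
    intro i j
    by_cases h : i = j
    · subst h
      rw [if_pos rfl, ← hvar i]
      congr 1
      funext ω'
      rw [sq]
    · rw [if_neg h]
      have h1 := (hBindep.indepFun h).integral_mul_eq_mul_integral (hBint i).1 (hBint j).1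
      calc ∫ ω', B i ω' * B j ω' ∂ℙ
          = (∫ ω', B i ω' ∂ℙ) * ∫ ω', B j ω' ∂ℙ := h1
        _ = 0 := by rw [hmean i, zero_mul]
  -- dot product of a sum of scaled vectors
  have hdots : ∀ (a : Fin G → ℝ) (w : Fin G → Fin k → ℝ) (v : Fin k → ℝ),
      v ⬝ᵥ (∑ j, a j • w j) = ∑ j, a j * (v ⬝ᵥ w j) := by
    intro a w v
    simp only [dotProduct, Finset.sum_apply, Pi.smul_apply, smul_eq_mul, Finset.mul_sum]
    rw [Finset.sum_comm]
    exact Finset.sum_congr rfl fun j _ => Finset.sum_congr rfl fun i _ => by ring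
  have hQl : ∀ ω' : Ω, Q⁻¹ *ᵥ (∑ j, B j ω' • m j) = ∑ j, B j ω' • (Q⁻¹ *ᵥ m j) := by
    intro ω'
    funext i
    simp only [Matrix.mulVec, dotProduct, Finset.sum_apply, Pi.smul_apply,
      smul_eq_mul, Finset.mul_sum]
    rw [Finset.sum_comm]
    exact Finset.sum_congr rfl fun j _ => Finset.sum_congr rfl fun l _ => by ring
  have hWlin : ∀ g ω', W g ω' = (∑ j, t g j * B j ω') + u g := by
    intro g ω'
    rw [hW g ω', hQl ω', hdots]
    have hsum : ∑ j, t g j * B j ω'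
        = c g * B g ω' - c g * (π g * ∑ j, B j ω' * (m g ⬝ᵥ (Q⁻¹ *ᵥ m j))) := by
      have hterm : ∀ j : Fin G, t g j * B j ω'
          = (if j = g then c g * B j ω' else 0)
            - c g * (π g * (B j ω' * (m g ⬝ᵥ (Q⁻¹ *ᵥ m j)))) := by
        intro j
        by_cases h : j = g
        · subst h; simp only [ht, eq_self_iff_true, if_true]; ring
        · simp only [ht, if_neg h]; ring
      rw [Finset.sum_congr rfl fun j _ => hterm j, Finset.sum_sub_distrib,
        Finset.sum_ite_eq' Finset.univ g, ← Finset.mul_sum, ← Finset.mul_sum]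
      simp [Finset.mem_univ]
    rw [hsum]
    show c g * _ = _
    simp only [hu]
    ring
  -- expectation of each W g squared
  have hWsq : ∀ g, Integrable (fun ω' => (W g ω') ^ 2) ℙ ∧
      ∫ ω', (W g ω') ^ 2 ∂ℙ = ∑ j, (t g j) ^ 2 * (π j * σ2) + (u g) ^ 2 := by
    intro g
    have hpt : (fun ω' => (W g ω') ^ 2) = fun ω' =>
        (∑ j, ∑ i, (t g j * t g i) * (B j ω' * B i ω'))
          + ((2 * u g) * ∑ j, t g j * B j ω' + (u g) ^ 2) := by
      funext ω'
      rw [hWlin g ω', add_sq]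
      have hss : (∑ j, t g j * B j ω') ^ 2
          = ∑ j, ∑ i, (t g j * t g i) * (B j ω' * B i ω') := by
        rw [sq, Finset.sum_mul_sum]
        exact Finset.sum_congr rfl fun j _ => Finset.sum_congr rfl fun i _ => by ring
      rw [hss]
      ring
    have hint2 : Integrable (fun ω' => ∑ j, ∑ i, (t g j * t g i) * (B j ω' * B i ω')) ℙ :=
      integrable_finset_sum _ fun j _ => integrable_finset_sum _ fun i _ =>
        ((hmul j i).const_mul _)
    have hintlin : Integrable (fun ω' => (2 * u g) * ∑ j, t g j * B j ω') ℙ := by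
      refine Integrable.const_mul ?_ _
      exact integrable_finset_sum _ fun j _ => (hBint j).const_mul _
    have hintlc : Integrable (fun ω' => (2 * u g) * (∑ j, t g j * B j ω') + (u g) ^ 2) ℙ :=
      hintlin.add (integrable_const _)
    refine ⟨by rw [hpt]; exact hint2.add hintlc, ?_⟩
    rw [hpt, integral_add hint2 hintlc,
      integral_add hintlin (integrable_const _),
      integral_finset_sum _ (fun j _ => integrable_finset_sum _ fun i _ =>
        (hmul j i).const_mul _)]
    have h3 : ∫ ω', (2 * u g) * ∑ j, t g j * B j ω' ∂ℙ = 0 := by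
      rw [integral_const_mul]
      rw [integral_finset_sum _ (fun j _ => (hBint j).const_mul _)]
      have h3' : ∀ j : Fin G, ∫ ω', t g j * B j ω' ∂ℙ = 0 := fun j => by
        rw [integral_const_mul, hmean, mul_zero]
      rw [Finset.sum_congr rfl fun j _ => h3' j]
      simp
    have h4 : ∀ j : Fin G, ∫ ω', ∑ i, (t g j * t g i) * (B j ω' * B i ω') ∂ℙ
        = (t g j) ^ 2 * (π j * σ2) := by
      intro j
      rw [integral_finset_sum _ (fun i _ => (hmul j i).const_mul _)]
      have h5 : ∀ i : Fin G, ∫ ω', (t g j * t g i) * (B j ω' * B i ω') ∂ℙ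
          = (t g j * t g i) * (if j = i then π j * σ2 else 0) := fun i => by
        rw [integral_const_mul, hBB j i]
      rw [Finset.sum_congr rfl fun i _ => h5 i, Finset.sum_eq_single j]
      · rw [if_pos rfl]; ring
      · intro i _ hij
        rw [if_neg fun h => hij h.symm, mul_zero]
      · intro h; exact absurd (Finset.mem_univ j) h
    rw [Finset.sum_congr rfl fun j _ => h4 j, h3, integral_const]
    simp [measure_univ]
  -- algebraic simplification of each term
  have halg : ∀ g, ∑ j, (t g j) ^ 2 * (π j * σ2) + (u g) ^ 2
      = σ2 * ω g - σ2 * (s g g * (π g * ω g)) + d g ^ 2 * π g * ω g := by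
    intro g
    have hterm : ∀ j : Fin G, (t g j) ^ 2 * (π j * σ2)
        = σ2 * c g ^ 2 * ((if j = g then π j else 0)
            - (if j = g then 2 * π g * (π j * s g j) else 0)
            + π g ^ 2 * (π j * s g j ^ 2)) := by
      intro j
      by_cases h : j = g
      · subst j; simp only [ht, eq_self_iff_true, if_true]; ring
      · simp only [ht, if_neg h]; ring
    rw [Finset.sum_congr rfl fun j _ => hterm j, ← Finset.mul_sum]
    rw [Finset.sum_add_distrib, Finset.sum_sub_distrib,
      Finset.sum_ite_eq' Finset.univ g, Finset.sum_ite_eq' Finset.univ g,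
      ← Finset.mul_sum, hkey g]
    simp only [Finset.mem_univ, if_pos]
    rw [hωc g]
    simp only [hu]
    ring
  -- put everything together
  rw [MeasureTheory.integral_finset_sum _ (fun g _ => (hWsq g).1),
    Finset.sum_congr rfl fun g (_ : g ∈ Finset.univ) => ((hWsq g).2.trans (halg g)),
    Finset.sum_add_distrib, Finset.sum_sub_distrib, ← Finset.mul_sum, ← Finset.mul_sum]
  have hSne : (∑ g, ω g) ≠ 0 := hpos.ne'
  rw [show (∑ g, (m g ⬝ᵥ (Q⁻¹ *ᵥ m g)) * (π g * ω g)) = ∑ g, s g g * (π g * ω g) from rfl]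
  field_simp
  ring
end

section
/- Suppose σ² > 0 and suppose the polynomial specification is correct in the sense that d_g = 0 for all g. Let B_1, …, B_G be independent real Gaussian random variables with B_g distributed as N(0, π_g σ²), and define W_g = (e₁ᵀQ⁻¹m_g)·( B_g − π_g m_gᵀQ⁻¹ Σ_{j=1}^G m_j B_j ). Then E[ Σ_{g=1}^G W_g² ] < σ² Σ_{g=1}^G ω_g; that is, under correct specification and homoskedasticity the large-sample limit of the cluster-robust variance estimator is strictly downward biased for the asymptotic variance of the regression discontinuity estimator. -/
open MeasureTheory ProbabilityTheory Matrix Finset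
open scoped NNReal ENNReal


lemma my_integral_sq_gauss {b : ℝ} (hb : 0 < b) :
    ∫ x : ℝ, x ^ 2 * Real.exp (-b * x ^ 2) = (2*b)⁻¹ * Real.sqrt (Real.pi / b) := by
  have hu : ∀ x : ℝ, HasDerivAt (fun x : ℝ => x) (1:ℝ) x := fun x => hasDerivAt_id x
  have hv : ∀ x : ℝ, HasDerivAt (fun x : ℝ => -(2*b)⁻¹ * Real.exp (-b*x^2))
      (x * Real.exp (-b*x^2)) x := by
    intro x
    have h1 : HasDerivAt (fun x : ℝ => -b*x^2) (-b*(2*x)) x := by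
      simpa using (hasDerivAt_pow 2 x).const_mul (-b)
    have h3 := (h1.exp).const_mul (-(2*b)⁻¹)
    refine h3.congr_deriv ?_
    field_simp
  have iA : Integrable (fun x : ℝ => x ^ 2 * Real.exp (-b*x^2)) := by
    have := integrable_rpow_mul_exp_neg_mul_sq hb (by norm_num : (-1:ℝ) < 2)
    rw [show ((2:ℝ)) = ((2:ℕ):ℝ) by norm_num] at this
    simpa [Real.rpow_natCast] using this
  have iuv' : Integrable ((fun x : ℝ => x) * (fun x : ℝ => x * Real.exp (-b*x^2))) := by
    apply iA.congr
    filter_upwards with x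
    simp [Pi.mul_apply]; ring
  have iu'v : Integrable ((fun _ : ℝ => (1:ℝ)) * (fun x : ℝ => -(2*b)⁻¹ * Real.exp (-b*x^2))) := by
    have := (integrable_exp_neg_mul_sq hb).const_mul (-(2*b)⁻¹)
    apply this.congr
    filter_upwards with x
    simp [Pi.mul_apply]
  have iuv : Integrable ((fun x : ℝ => x) * (fun x : ℝ => -(2*b)⁻¹ * Real.exp (-b*x^2))) := by
    have := (integrable_mul_exp_neg_mul_sq hb).const_mul (-(2*b)⁻¹)
    apply this.congr
    filter_upwards with x
    simp [Pi.mul_apply]; ring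
  have key := MeasureTheory.integral_mul_deriv_eq_deriv_mul_of_integrable (fun x _ => hu x) (fun x _ => hv x) iuv' iu'v iuv
  have hL : ∫ x : ℝ, x * (x * Real.exp (-b*x^2)) = ∫ x : ℝ, x ^ 2 * Real.exp (-b * x ^ 2) := by
    congr 1; funext x; ring
  have hR : ∫ x : ℝ, (1:ℝ) * (-(2*b)⁻¹ * Real.exp (-b*x^2)) = -(2*b)⁻¹ * Real.sqrt (Real.pi / b) := by
    simp_rw [one_mul]
    rw [MeasureTheory.integral_const_mul, integral_gaussian]
  rw [hL, hR] at key
  rw [key]; ring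


lemma gauss_density_integral {v : ℝ≥0} (hv : v ≠ 0) (g : ℝ → ℝ) :
    ∫ x, g x ∂(gaussianReal 0 v) = ∫ x, gaussianPDFReal 0 v x * g x := by
  rw [gaussianReal_of_var_ne_zero 0 hv]
  have hm : Measurable fun x => (gaussianPDFReal 0 v x).toNNReal :=
    (measurable_gaussianPDFReal 0 v).real_toNNReal
  have : (volume.withDensity (gaussianPDF 0 v))
      = volume.withDensity (fun x => ((gaussianPDFReal 0 v x).toNNReal : ℝ≥0∞)) := rfl
  rw [this, integral_withDensity_eq_integral_smul hm]
  congr 1; funext x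
  simp [NNReal.smul_def, Real.coe_toNNReal _ (gaussianPDFReal_nonneg 0 v x)]

lemma gauss_density_integrable_iff {v : ℝ≥0} (hv : v ≠ 0) (g : ℝ → ℝ) :
    Integrable g (gaussianReal 0 v) ↔
      Integrable (fun x => gaussianPDFReal 0 v x * g x) volume := by
  rw [gaussianReal_of_var_ne_zero 0 hv]
  have hm : Measurable fun x => (gaussianPDFReal 0 v x).toNNReal :=
    (measurable_gaussianPDFReal 0 v).real_toNNReal
  have h : (volume.withDensity (gaussianPDF 0 v))
      = volume.withDensity (fun x => ((gaussianPDFReal 0 v x).toNNReal : ℝ≥0∞)) := rfl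
  rw [h, integrable_withDensity_iff_integrable_smul hm]
  constructor <;> intro hi <;> apply hi.congr <;> filter_upwards with x <;>
    simp [NNReal.smul_def, Real.coe_toNNReal _ (gaussianPDFReal_nonneg 0 v x)]

lemma gauss_pdf_zero_eq {v : ℝ≥0} :
    gaussianPDFReal 0 v = fun x => (Real.sqrt (2 * Real.pi * v))⁻¹ * Real.exp (-(2*(v:ℝ))⁻¹ * x^2) := by
  funext x
  simp only [gaussianPDFReal, sub_zero]
  congr 1
  congr 1
  ring

lemma gauss_integrable_id {v : ℝ≥0} (hv : v ≠ 0) :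
    Integrable (fun x => x) (gaussianReal 0 v) := by
  have hv0 : (0:ℝ) < v := by positivity
  have hb : (0:ℝ) < (2*(v:ℝ))⁻¹ := by positivity
  rw [gauss_density_integrable_iff hv, gauss_pdf_zero_eq]
  have := ((integrable_mul_exp_neg_mul_sq hb).const_mul (Real.sqrt (2 * Real.pi * v))⁻¹)
  apply this.congr
  filter_upwards with x
  ring

lemma gauss_integrable_sq {v : ℝ≥0} (hv : v ≠ 0) :
    Integrable (fun x => x^2) (gaussianReal 0 v) := by
  have hv0 : (0:ℝ) < v := by positivity
  have hb : (0:ℝ) < (2*(v:ℝ))⁻¹ := by positivity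
  rw [gauss_density_integrable_iff hv, gauss_pdf_zero_eq]
  have iA : Integrable (fun x : ℝ => x ^ 2 * Real.exp (-(2*(v:ℝ))⁻¹*x^2)) := by
    have := integrable_rpow_mul_exp_neg_mul_sq hb (by norm_num : (-1:ℝ) < 2)
    rw [show ((2:ℝ)) = ((2:ℕ):ℝ) by norm_num] at this
    simpa [Real.rpow_natCast] using this
  apply (iA.const_mul (Real.sqrt (2 * Real.pi * v))⁻¹).congr
  filter_upwards with x
  ring

lemma gauss_moment_one {v : ℝ≥0} (hv : v ≠ 0) :
    ∫ x, x ∂(gaussianReal 0 v) = 0 := by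
  rw [gauss_density_integral hv]
  set f : ℝ → ℝ := fun x => gaussianPDFReal 0 v x * x with hf
  have hodd : ∀ x, f (-x) = - f x := by
    intro x
    simp only [hf, gaussianPDFReal, sub_zero, neg_sq, mul_neg]
  have h1 : ∫ x, f (-x) = ∫ x, f x := integral_neg_eq_self f volume
  have h2 : ∫ x, f (-x) = - ∫ x, f x := by
    simp_rw [hodd]
    exact integral_neg f
  linarith [h1, h2]

lemma gauss_moment_sq {v : ℝ≥0} (hv : v ≠ 0) :
    ∫ x, x^2 ∂(gaussianReal 0 v) = v := by
  have hv0 : (0:ℝ) < v := by positivity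
  have hb : (0:ℝ) < (2*(v:ℝ))⁻¹ := by positivity
  rw [gauss_density_integral hv, gauss_pdf_zero_eq]
  have h1 : ∀ x : ℝ, (Real.sqrt (2 * Real.pi * v))⁻¹ * Real.exp (-(2*(v:ℝ))⁻¹ * x^2) * x^2
      = (Real.sqrt (2 * Real.pi * v))⁻¹ * (x^2 * Real.exp (-(2*(v:ℝ))⁻¹ * x^2)) := fun x => by ring
  simp_rw [h1]
  rw [MeasureTheory.integral_const_mul, my_integral_sq_gauss hb]
  rw [show (2*((2*(v:ℝ))⁻¹))⁻¹ = (v:ℝ) by field_simp,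
    show Real.pi / ((2*(v:ℝ))⁻¹) = 2*Real.pi*(v:ℝ) by field_simp]
  have hs : Real.sqrt (2*Real.pi*(v:ℝ)) ≠ 0 := by positivity
  field_simp
/-- Under correct specification and homoskedasticity, the large-sample limit of the
cluster-robust variance estimator is strictly downward biased for the asymptotic
variance of the RD estimator. -/
theorem crv_downward_bias_correct_specification
    {Ω : Type*} [MeasureSpace Ω] [IsProbabilityMeasure (ℙ : Measure Ω)]
    (k G : ℕ) (hk : 0 < k) (hG : 0 < G)
    (m : Fin G → Fin k → ℝ) (π : Fin G → ℝ)
    (hπ : ∀ g, 0 < π g) (hπ1 : ∑ g, π g = 1)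
    (σ2 : ℝ) (hσ2 : 0 < σ2)
    (Q : Matrix (Fin k) (Fin k) ℝ)
    (hQ : Q = ∑ g, π g • vecMulVec (m g) (m g))
    (hQinv : IsUnit Q.det)
    (e1 : Fin k → ℝ) (he1 : e1 = Pi.single ⟨0, hk⟩ 1)
    (ω : Fin G → ℝ)
    (hω : ∀ g, ω g = e1 ⬝ᵥ ((Q⁻¹ * (π g • vecMulVec (m g) (m g)) * Q⁻¹) *ᵥ e1))
    (B : Fin G → Ω → ℝ)
    (hBmeas : ∀ g, Measurable (B g))
    (hBindep : iIndepFun B ℙ)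
    (hBlaw : ∀ g, Measure.map (B g) ℙ = gaussianReal 0 (Real.toNNReal (π g * σ2)))
    (W : Fin G → Ω → ℝ)
    (hW : ∀ g ω', W g ω' = (e1 ⬝ᵥ (Q⁻¹ *ᵥ m g)) *
      (B g ω' - π g * (m g ⬝ᵥ (Q⁻¹ *ᵥ (∑ j, B j ω' • m j))))) :
    (∫ ω', ∑ g, (W g ω') ^ 2 ∂ℙ) < σ2 * ∑ g, ω g := by
  classical
  -- variance facts
  have hvpos : ∀ g, (0:ℝ) < π g * σ2 := fun g => mul_pos (hπ g) hσ2
  have hvne : ∀ g, (Real.toNNReal (π g * σ2)) ≠ 0 := fun g => by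
    simp [Real.toNNReal_eq_zero, not_le, hvpos g]
  have hvco : ∀ g, ((Real.toNNReal (π g * σ2) : ℝ≥0) : ℝ) = π g * σ2 :=
    fun g => Real.coe_toNNReal _ (hvpos g).le
  -- integrability and moments of the B's
  have hBint : ∀ g, Integrable (B g) ℙ := by
    intro g
    have h := gauss_integrable_id (hvne g)
    rw [← hBlaw g] at h
    exact (integrable_map_measure h.1 (hBmeas g).aemeasurable).mp h
  have hBsq : ∀ g, Integrable (fun ω' => (B g ω')^2) ℙ := by
    intro g
    have h := gauss_integrable_sq (hvne g)
    rw [← hBlaw g] at h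
    exact (integrable_map_measure h.1 (hBmeas g).aemeasurable).mp h
  have hEB : ∀ g, ∫ ω', B g ω' ∂ℙ = 0 := by
    intro g
    have h := integral_map (μ := (ℙ : Measure Ω)) (hBmeas g).aemeasurable
      (f := fun x : ℝ => x) aestronglyMeasurable_id
    rw [hBlaw g, gauss_moment_one (hvne g)] at h
    exact h.symm
  have hEB2 : ∀ g, ∫ ω', (B g ω')^2 ∂ℙ = π g * σ2 := by
    intro g
    have h := integral_map (μ := (ℙ : Measure Ω)) (hBmeas g).aemeasurable
      (f := fun x : ℝ => x^2) (by fun_prop)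
    rw [hBlaw g, gauss_moment_sq (hvne g), hvco g] at h
    exact h.symm
  have hprod : ∀ i j, Integrable (fun ω' => B i ω' * B j ω') ℙ := by
    intro i j
    by_cases h : i = j
    · subst h
      exact (hBsq i).congr (by filter_upwards with x; rw [sq])
    · exact ((hBindep.indepFun h).integrable_mul (hBint i) (hBint j)).congr
        (by filter_upwards with x; simp [Pi.mul_apply])
  have hEprod : ∀ i j, ∫ ω', B i ω' * B j ω' ∂ℙ = if i = j then π i * σ2 else 0 := by
    intro i j
    by_cases h : i = j
    · subst h
      simp only [if_pos rfl]
      rw [← hEB2 i]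
      congr 1; funext x; rw [sq]
    · simp only [if_neg h]
      have h2 : ∫ ω', B i ω' * B j ω' ∂ℙ = (∫ ω', B i ω' ∂ℙ) * ∫ ω', B j ω' ∂ℙ :=
        (hBindep.indepFun h).integral_mul_eq_mul_integral (hBint i).1 (hBint j).1
      rw [h2, hEB i, zero_mul]
  -- the key second-moment computation for linear combinations
  have key : ∀ d : Fin G → ℝ, ∫ ω', (∑ j, d j * B j ω')^2 ∂ℙ = ∑ j, d j^2 * (π j * σ2) := by
    intro d
    have hexp : ∀ ω', (∑ j, d j * B j ω')^2 = ∑ i, ∑ j, (d i * d j) * (B i ω' * B j ω') := by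
      intro ω'
      rw [sq, Finset.sum_mul_sum]
      exact Finset.sum_congr rfl fun i _ => Finset.sum_congr rfl fun j _ => by ring
    simp_rw [hexp]
    rw [integral_finset_sum _ (fun i _ => integrable_finset_sum _
      (fun j _ => ((hprod i j).const_mul _)))]
    have h2 : ∀ i, ∫ ω', ∑ j, (d i * d j) * (B i ω' * B j ω') ∂ℙ
        = ∑ j, (d i * d j) * (if i = j then π i * σ2 else 0) := by
      intro i
      rw [integral_finset_sum _ (fun j _ => (hprod i j).const_mul _)]
      exact Finset.sum_congr rfl fun j _ => by rw [integral_const_mul, hEprod i j]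
    simp_rw [h2, mul_ite, mul_zero, Finset.sum_ite_eq, mem_univ, if_pos]
    exact Finset.sum_congr rfl fun j _ => by ring
  have intsq : ∀ d : Fin G → ℝ, Integrable (fun ω' => (∑ j, d j * B j ω')^2) ℙ := by
    intro d
    have : Integrable (fun ω' => ∑ i, ∑ j, (d i * d j) * (B i ω' * B j ω')) ℙ :=
      integrable_finset_sum _ (fun i _ => integrable_finset_sum _
        (fun j _ => ((hprod i j).const_mul _)))
    apply this.congr
    filter_upwards with ω'
    rw [sq, Finset.sum_mul_sum]
    exact (Finset.sum_congr rfl fun i _ => Finset.sum_congr rfl fun j _ => by ring).symm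
  -- ### matrix facts
  have hQsym : Qᵀ = Q := by
    rw [hQ]
    ext i j
    simp only [Matrix.transpose_apply, Matrix.sum_apply, Matrix.smul_apply, vecMulVec_apply,
      smul_eq_mul]
    exact Finset.sum_congr rfl fun g _ => by ring
  have hSsym : (Q⁻¹)ᵀ = Q⁻¹ := by rw [Matrix.transpose_nonsing_inv, hQsym]
  have hsymdot : ∀ x y : Fin k → ℝ, x ⬝ᵥ (Q⁻¹ *ᵥ y) = (Q⁻¹ *ᵥ x) ⬝ᵥ y := by
    intro x y
    rw [Matrix.dotProduct_mulVec]
    congr 1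
    rw [← Matrix.vecMul_transpose, hSsym]
  have hvmv : ∀ (a b c : Fin k → ℝ), vecMulVec a b *ᵥ c = (b ⬝ᵥ c) • a := by
    intro a b c
    ext i
    simp only [Matrix.mulVec, vecMulVec_apply, dotProduct, Pi.smul_apply, smul_eq_mul,
      Finset.sum_mul]
    exact Finset.sum_congr rfl fun j _ => by ring
  have hsummulvec : ∀ (N : Fin G → Matrix (Fin k) (Fin k) ℝ) (u : Fin k → ℝ),
      (∑ j, N j) *ᵥ u = ∑ j, N j *ᵥ u := by
    intro N u
    ext i
    simp only [Matrix.mulVec, dotProduct, Matrix.sum_apply, Finset.sum_apply, Finset.sum_mul]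
    exact Finset.sum_comm
  have hdotsum : ∀ (x : Fin k → ℝ) (f : Fin G → Fin k → ℝ),
      x ⬝ᵥ (∑ j, f j) = ∑ j, x ⬝ᵥ f j := by
    intro x f
    simp only [dotProduct, Finset.sum_apply, Finset.mul_sum]
    exact Finset.sum_comm
  have hmsum : ∀ (c : Fin G → ℝ), Q⁻¹ *ᵥ (∑ j, c j • m j) = ∑ j, c j • (Q⁻¹ *ᵥ m j) := by
    intro c
    ext i
    simp only [Matrix.mulVec, dotProduct, Finset.sum_apply, Pi.smul_apply, smul_eq_mul,
      Finset.mul_sum]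
    rw [Finset.sum_comm]
    exact Finset.sum_congr rfl fun j _ => Finset.sum_congr rfl fun l _ => by ring
  set D : Fin G → Fin G → ℝ := fun g j => (e1 ⬝ᵥ (Q⁻¹ *ᵥ m g)) *
    ((if j = g then (1:ℝ) else 0) - π g * (m g ⬝ᵥ (Q⁻¹ *ᵥ m j))) with hD
  have hWlin : ∀ g ω', W g ω' = ∑ j, D g j * B j ω' := by
    intro g ω'
    rw [hW, hmsum, hdotsum]
    simp_rw [dotProduct_smul, smul_eq_mul]
    have hterm : ∀ j, D g j * B j ω' =
        (if j = g then (e1 ⬝ᵥ (Q⁻¹ *ᵥ m g)) * B j ω' else 0)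
          - (e1 ⬝ᵥ (Q⁻¹ *ᵥ m g)) * (π g * (B j ω' * (m g ⬝ᵥ (Q⁻¹ *ᵥ m j)))) := by
      intro j
      by_cases h : j = g <;> simp only [hD, h, if_pos, if_neg, if_true, if_false] <;> ring
    have h3 : ∑ j, D g j * B j ω'
        = (e1 ⬝ᵥ (Q⁻¹ *ᵥ m g)) * B g ω'
          - (e1 ⬝ᵥ (Q⁻¹ *ᵥ m g)) * (π g * ∑ j, B j ω' * (m g ⬝ᵥ (Q⁻¹ *ᵥ m j))) := by
      rw [Finset.sum_congr rfl fun j _ => hterm j, Finset.sum_sub_distrib,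
        Finset.sum_ite_eq' univ g (fun j => (e1 ⬝ᵥ (Q⁻¹ *ᵥ m g)) * B j ω'),
        if_pos (mem_univ g), ← Finset.mul_sum, ← Finset.mul_sum]
    rw [h3]
    ring
  have hdotQ : ∀ x : Fin k → ℝ, x ⬝ᵥ (Q *ᵥ x) = ∑ g, π g * (m g ⬝ᵥ x)^2 := by
    intro x
    conv_lhs => rw [hQ]
    rw [hsummulvec, hdotsum]
    refine Finset.sum_congr rfl fun g _ => ?_
    rw [Matrix.smul_mulVec, hvmv, dotProduct_smul, dotProduct_smul]
    simp only [smul_eq_mul]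
    rw [dotProduct_comm x (m g)]
    ring
  have hQmv : ∀ u : Fin k → ℝ, Q *ᵥ u = ∑ g, (π g * (m g ⬝ᵥ u)) • m g := by
    intro u
    conv_lhs => rw [hQ]
    rw [hsummulvec]
    refine Finset.sum_congr rfl fun g _ => ?_
    rw [Matrix.smul_mulVec, hvmv, smul_smul]
  have hkeyid : ∀ g, ∑ j, π j * (m g ⬝ᵥ (Q⁻¹ *ᵥ m j))^2 = m g ⬝ᵥ (Q⁻¹ *ᵥ m g) := by
    intro g
    have hu : ∀ j, m g ⬝ᵥ (Q⁻¹ *ᵥ m j) = (Q⁻¹ *ᵥ m g) ⬝ᵥ m j := fun j => hsymdot (m g) (m j)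
    have hQu : Q *ᵥ (Q⁻¹ *ᵥ m g) = m g := by
      rw [Matrix.mulVec_mulVec, Matrix.mul_nonsing_inv Q hQinv, Matrix.one_mulVec]
    calc ∑ j, π j * (m g ⬝ᵥ (Q⁻¹ *ᵥ m j))^2
        = ∑ j, π j * (m j ⬝ᵥ (Q⁻¹ *ᵥ m g))^2 := by
          refine Finset.sum_congr rfl fun j _ => ?_
          rw [hu j, dotProduct_comm]
      _ = (Q⁻¹ *ᵥ m g) ⬝ᵥ (Q *ᵥ (Q⁻¹ *ᵥ m g)) := (hdotQ _).symm
      _ = (Q⁻¹ *ᵥ m g) ⬝ᵥ m g := by rw [hQu]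
      _ = m g ⬝ᵥ (Q⁻¹ *ᵥ m g) := dotProduct_comm _ _
  have hωg : ∀ g, ω g = π g * (e1 ⬝ᵥ (Q⁻¹ *ᵥ m g))^2 := by
    intro g
    rw [hω g, ← Matrix.mulVec_mulVec, ← Matrix.mulVec_mulVec, Matrix.smul_mulVec, hvmv,
      Matrix.mulVec_smul, Matrix.mulVec_smul, dotProduct_smul, dotProduct_smul]
    simp only [smul_eq_mul]
    rw [hsymdot (m g) e1, dotProduct_comm (Q⁻¹ *ᵥ m g) e1]
    ring
  -- positive definiteness
  have hstar : ∀ x : Fin k → ℝ, star x = x := fun x => funext fun i => rfl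
  have hQpd : Q.PosDef := by
    refine Matrix.PosDef.of_dotProduct_mulVec_pos ?_ ?_
    · show Qᴴ = Q
      rw [Matrix.conjTranspose_eq_transpose_of_trivial, hQsym]
    · intro x hx
      rw [hstar x]
      have hnn : 0 ≤ x ⬝ᵥ (Q *ᵥ x) := by
        rw [hdotQ]
        exact Finset.sum_nonneg fun g _ => mul_nonneg (hπ g).le (sq_nonneg _)
      rcases eq_or_lt_of_le hnn with h0 | h
      swap
      · exact h
      exfalso
      have hz : ∀ g ∈ (univ : Finset (Fin G)), π g * (m g ⬝ᵥ x)^2 = 0 := by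
        rw [hdotQ] at h0
        exact (Finset.sum_eq_zero_iff_of_nonneg
          (fun g _ => mul_nonneg (hπ g).le (sq_nonneg _))).mp h0.symm
      have hQx : Q *ᵥ x = 0 := by
        rw [hQ, hsummulvec]
        refine Finset.sum_eq_zero fun g _ => ?_
        have h1 : (m g ⬝ᵥ x)^2 = 0 := by
          have h2 := hz g (mem_univ g)
          rcases mul_eq_zero.mp h2 with h3 | h3
          · exact absurd h3 (hπ g).ne'
          · exact h3
        have h4 : m g ⬝ᵥ x = 0 := by
          exact pow_eq_zero_iff (two_ne_zero) |>.mp h1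
        rw [Matrix.smul_mulVec, hvmv, h4, zero_smul, smul_zero]
      apply hx
      have h5 : x = Q⁻¹ *ᵥ (Q *ᵥ x) := by
        rw [Matrix.mulVec_mulVec, Matrix.nonsing_inv_mul Q hQinv, Matrix.one_mulVec]
      rw [h5, hQx, Matrix.mulVec_zero]
  have hSpd : (Q⁻¹).PosDef := hQpd.inv
  have hsgg : ∀ g, 0 ≤ m g ⬝ᵥ (Q⁻¹ *ᵥ m g) := by
    intro g
    have h := hSpd.posSemidef.dotProduct_mulVec_nonneg (m g)
    rwa [hstar] at h
  -- find a coordinate with strict positivity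
  have hQw : ∑ g, (π g * (e1 ⬝ᵥ (Q⁻¹ *ᵥ m g))) • m g = e1 := by
    have h1 : Q *ᵥ (Q⁻¹ *ᵥ e1) = e1 := by
      rw [Matrix.mulVec_mulVec, Matrix.mul_nonsing_inv Q hQinv, Matrix.one_mulVec]
    calc ∑ g, (π g * (e1 ⬝ᵥ (Q⁻¹ *ᵥ m g))) • m g
        = ∑ g, (π g * (m g ⬝ᵥ (Q⁻¹ *ᵥ e1))) • m g := by
          refine Finset.sum_congr rfl fun g _ => ?_
          rw [hsymdot (m g) e1, dotProduct_comm]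
      _ = Q *ᵥ (Q⁻¹ *ᵥ e1) := (hQmv _).symm
      _ = e1 := h1
  obtain ⟨g0, hg0⟩ : ∃ g, (π g * (e1 ⬝ᵥ (Q⁻¹ *ᵥ m g))) • m g ≠ 0 := by
    by_contra h
    push_neg at h
    have he0 : e1 = 0 := by
      rw [← hQw]
      exact Finset.sum_eq_zero fun g _ => h g
    rw [he1] at he0
    have := congrFun he0 ⟨0, hk⟩
    simp at this
  have ha0 : e1 ⬝ᵥ (Q⁻¹ *ᵥ m g0) ≠ 0 ∧ m g0 ≠ 0 := by
    rcases smul_ne_zero_iff.mp hg0 with ⟨h1, h2⟩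
    exact ⟨fun h => h1 (by rw [h, mul_zero]), h2⟩
  have hsgpos : 0 < m g0 ⬝ᵥ (Q⁻¹ *ᵥ m g0) := by
    have h := hSpd.dotProduct_mulVec_pos ha0.2
    rwa [hstar] at h
  -- ### final assembly
  have hWint : ∀ g, Integrable (fun ω' => W g ω'^2) ℙ := by
    intro g
    apply (intsq (D g)).congr
    filter_upwards with ω'
    rw [hWlin g ω']
  rw [integral_finset_sum _ (fun g _ => hWint g)]
  have hterm : ∀ g, ∫ ω', W g ω'^2 ∂ℙ
      = σ2 * π g * (e1 ⬝ᵥ (Q⁻¹ *ᵥ m g))^2 * (1 - π g * (m g ⬝ᵥ (Q⁻¹ *ᵥ m g))) := by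
    intro g
    have h1 : (fun ω' => W g ω'^2) = fun ω' => (∑ j, D g j * B j ω')^2 :=
      funext fun ω' => by rw [hWlin]
    rw [h1, key (D g)]
    have h2 : ∀ j, (D g j)^2 * (π j * σ2)
        = (if j = g then (e1 ⬝ᵥ (Q⁻¹ *ᵥ m g))^2*(π g * σ2)
            - 2*(e1 ⬝ᵥ (Q⁻¹ *ᵥ m g))^2*(π g * (m g ⬝ᵥ (Q⁻¹ *ᵥ m j)))*(π g * σ2) else 0)
          + (e1 ⬝ᵥ (Q⁻¹ *ᵥ m g))^2 * (π g)^2 * σ2 * (π j * (m g ⬝ᵥ (Q⁻¹ *ᵥ m j))^2) := by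
      intro j
      by_cases h : j = g <;>
        simp only [hD, h, if_pos, if_neg, if_true, if_false, not_false_iff] <;> ring
    rw [Finset.sum_congr rfl fun j _ => h2 j, Finset.sum_add_distrib,
      Finset.sum_ite_eq' univ g _, if_pos (mem_univ g), ← Finset.mul_sum, hkeyid g]
    ring
  have hRHS : σ2 * ∑ g, ω g = ∑ g, σ2 * π g * (e1 ⬝ᵥ (Q⁻¹ *ᵥ m g))^2 := by
    rw [Finset.mul_sum]
    exact Finset.sum_congr rfl fun g _ => by rw [hωg g]; ring
  rw [hRHS, Finset.sum_congr rfl (fun g _ => hterm g)]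
  apply Finset.sum_lt_sum
  · intro g _
    have h1 : 0 ≤ σ2 * π g * (e1 ⬝ᵥ (Q⁻¹ *ᵥ m g))^2 * (π g * (m g ⬝ᵥ (Q⁻¹ *ᵥ m g))) :=
      mul_nonneg (mul_nonneg (mul_nonneg hσ2.le (hπ g).le) (sq_nonneg _))
        (mul_nonneg (hπ g).le (hsgg g))
    nlinarith [h1]
  · refine ⟨g0, mem_univ g0, ?_⟩
    have ha2 : 0 < (e1 ⬝ᵥ (Q⁻¹ *ᵥ m g0))^2 :=
      lt_of_le_of_ne (sq_nonneg _) (Ne.symm (pow_ne_zero 2 ha0.1))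
    have h1 : 0 < σ2 * π g0 * (e1 ⬝ᵥ (Q⁻¹ *ᵥ m g0))^2 * (π g0 * (m g0 ⬝ᵥ (Q⁻¹ *ᵥ m g0))) :=
      mul_pos (mul_pos (mul_pos hσ2 (hπ g0)) ha2) (mul_pos (hπ g0) hsgpos)
    nlinarith [h1]
end

section
/- For any real constants c_1, …, c_G and any fixed θ ∈ ℝ^k and map m: {x_1, …, x_G} → ℝ^k, define δ_g = μ_g − m(x_g)ᵀθ and u_i = Y_i − m(X_i)ᵀθ. Then E[ (1/N) Σ_{g=1}^G c_g² ( Σ_{i=1}^N 1{X_i = x_g} u_i )² ] = Σ_{g=1}^G c_g² π_g (σ_g² + δ_g²) + (N−1) Σ_{g=1}^G c_g² π_g² δ_g². -/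
open MeasureTheory ProbabilityTheory Matrix Finset

/-- Finite-sample expectation identity underlying Theorem 2 of the paper: the expected
value of the (normalized) sum of squared within-cluster residual sums equals the EHW
term plus a misspecification term of order N−1. -/
theorem expected_within_cluster_square_identity
    {Ω : Type*} [MeasureSpace Ω] [IsProbabilityMeasure (ℙ : Measure Ω)]
    (N G k : ℕ) (hN : 0 < N) (hG : 0 < G) (hk : 0 < k)
    (X Y : Fin N → Ω → ℝ)
    (hXmeas : ∀ i, Measurable (X i)) (hYmeas : ∀ i, Measurable (Y i))
    (hindep : iIndepFun (fun i ω => (X i ω, Y i ω)) ℙ)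
    (hident : ∀ i, Measure.map (fun ω => (X i ω, Y i ω)) ℙ
      = Measure.map (fun ω => (X ⟨0, hN⟩ ω, Y ⟨0, hN⟩ ω)) ℙ)
    (x : Fin G → ℝ) (hxinj : Function.Injective x)
    (hsupp : ∀ i ω, X i ω ∈ Set.range x)
    (π : Fin G → ℝ)
    (hπ : ∀ g, π g = (ℙ {ω | X ⟨0, hN⟩ ω = x g}).toReal)
    (hπpos : ∀ g, 0 < π g)
    (hY2 : Integrable (fun ω => (Y ⟨0, hN⟩ ω) ^ 2) ℙ)
    (μ σsq : Fin G → ℝ)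
    (hμ : ∀ g, μ g =
      (∫ ω, (if X ⟨0, hN⟩ ω = x g then Y ⟨0, hN⟩ ω else 0) ∂ℙ) / π g)
    (hσsq : ∀ g, σsq g =
      (∫ ω, (if X ⟨0, hN⟩ ω = x g then (Y ⟨0, hN⟩ ω - μ g) ^ 2 else 0) ∂ℙ) / π g)
    (c : Fin G → ℝ) (θ : Fin k → ℝ) (m : ℝ → Fin k → ℝ)
    (δ : Fin G → ℝ) (hδ : ∀ g, δ g = μ g - m (x g) ⬝ᵥ θ)
    (u : Fin N → Ω → ℝ) (hu : ∀ i ω, u i ω = Y i ω - m (X i ω) ⬝ᵥ θ) :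
    ∫ ω, (1 / (N : ℝ)) *
        ∑ g, (c g) ^ 2 * (∑ i, (if X i ω = x g then u i ω else 0)) ^ 2 ∂ℙ
      = ∑ g, (c g) ^ 2 * π g * (σsq g + (δ g) ^ 2)
        + ((N : ℝ) - 1) * ∑ g, (c g) ^ 2 * (π g) ^ 2 * (δ g) ^ 2 := by
  classical
  have hNR : (N : ℝ) ≠ 0 := Nat.cast_ne_zero.2 hN.ne'
  set o : Fin N := ⟨0, hN⟩ with ho
  set C : Fin G → ℝ := fun g => m (x g) ⬝ᵥ θ with hCdef
  set F : Fin G → ℝ × ℝ → ℝ := fun g p => if p.1 = x g then p.2 - C g else 0 with hFdef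
  have hFmeas : ∀ g, Measurable (F g) := by
    intro g
    apply Measurable.ite
    · exact measurable_fst (measurableSet_singleton (x g))
    · exact measurable_snd.sub measurable_const
    · exact measurable_const
  have hPmeas : ∀ i, Measurable (fun ω => (X i ω, Y i ω)) := fun i =>
    (hXmeas i).prodMk (hYmeas i)
  set Z : Fin G → Fin N → Ω → ℝ := fun g i ω => F g (X i ω, Y i ω) with hZdef
  have hZ : ∀ g i ω, (if X i ω = x g then u i ω else 0) = Z g i ω := by
    intro g i ω
    simp only [hZdef, hFdef, hu]
    split_ifs with h
    · rw [h]
    · rfl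
  -- transport lemma via identical distribution
  have htrans : ∀ (f : ℝ × ℝ → ℝ), Measurable f → ∀ i : Fin N,
      (Integrable (fun ω => f (X i ω, Y i ω)) ℙ ↔
        Integrable (fun ω => f (X o ω, Y o ω)) ℙ)
      ∧ ∫ ω, f (X i ω, Y i ω) ∂ℙ = ∫ ω, f (X o ω, Y o ω) ∂ℙ := by
    intro f hf i
    have e1 : ∀ j : Fin N, Integrable (fun ω => f (X j ω, Y j ω)) ℙ ↔
        Integrable f (Measure.map (fun ω => (X j ω, Y j ω)) ℙ) := fun j =>
      (integrable_map_measure hf.aestronglyMeasurable (hPmeas j).aemeasurable).symm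
    have e2 : ∀ j : Fin N, ∫ ω, f (X j ω, Y j ω) ∂ℙ
        = ∫ p, f p ∂(Measure.map (fun ω => (X j ω, Y j ω)) ℙ) := fun j =>
      (integral_map (hPmeas j).aemeasurable hf.aestronglyMeasurable).symm
    exact ⟨by rw [e1 i, e1 o, hident i], by rw [e2 i, e2 o, hident i]⟩
  -- basic integrability at index 0
  have hY1 : Integrable (Y o) ℙ := by
    refine (hY2.add (integrable_const 1)).mono' (hYmeas o).aestronglyMeasurable ?_
    filter_upwards with ω
    have h1 : |Y o ω| ≤ (Y o ω) ^ 2 + 1 := by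
      nlinarith [sq_nonneg (|Y o ω| - 1), sq_abs (Y o ω), abs_nonneg (Y o ω)]
    simpa [Real.norm_eq_abs] using h1
  have hAmeas : ∀ g, MeasurableSet {ω | X o ω = x g} := fun g =>
    hXmeas o (measurableSet_singleton (x g))
  have hitemeas : ∀ (g : Fin G) (h : Ω → ℝ), Measurable h →
      Measurable (fun ω => if X o ω = x g then h ω else 0) := fun g h hh =>
    Measurable.ite (hAmeas g) hh measurable_const
  have i0 : ∀ g, Integrable (fun ω => if X o ω = x g then (1 : ℝ) else 0) ℙ := by
    intro g
    refine (integrable_const (1 : ℝ)).mono'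
      (hitemeas g _ measurable_const).aestronglyMeasurable ?_
    filter_upwards with ω
    split_ifs <;> simp
  have i1 : ∀ g, Integrable (fun ω => if X o ω = x g then Y o ω else 0) ℙ := by
    intro g
    refine hY1.abs.mono' (hitemeas g _ (hYmeas o)).aestronglyMeasurable ?_
    filter_upwards with ω
    split_ifs <;> simp [Real.norm_eq_abs, abs_nonneg]
  have i2 : ∀ g, Integrable (fun ω => if X o ω = x g then (Y o ω) ^ 2 else 0) ℙ := by
    intro g
    refine hY2.abs.mono' (hitemeas g _ ((hYmeas o).pow_const 2)).aestronglyMeasurable ?_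
    filter_upwards with ω
    split_ifs <;> simp [Real.norm_eq_abs, abs_nonneg, sq_nonneg]
  -- values of basic integrals
  have hJ0 : ∀ g, ∫ ω, (if X o ω = x g then (1 : ℝ) else 0) ∂ℙ = π g := by
    intro g
    rw [hπ g]
    have heq : (fun ω => if X o ω = x g then (1 : ℝ) else 0)
        = Set.indicator {ω | X o ω = x g} (fun _ => (1 : ℝ)) := by
      funext ω
      simp [Set.indicator_apply]
    rw [heq, integral_indicator_const _ (hAmeas g)]
    simp
    rfl
  have hJ1 : ∀ g, ∫ ω, (if X o ω = x g then Y o ω else 0) ∂ℙ = μ g * π g := by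
    intro g
    rw [hμ g, div_mul_cancel₀ _ (hπpos g).ne']
  -- splitting lemma
  have hsplit : ∀ (g : Fin G) (a b cc : ℝ),
      (fun ω => if X o ω = x g then a * (Y o ω) ^ 2 + b * (Y o ω) + cc else 0)
      = (fun ω => a * (if X o ω = x g then (Y o ω) ^ 2 else 0)
          + b * (if X o ω = x g then Y o ω else 0)
          + cc * (if X o ω = x g then (1 : ℝ) else 0)) := by
    intro g a b cc
    funext ω
    split_ifs <;> ring
  have masterInt : ∀ (g : Fin G) (a b cc : ℝ),
      Integrable (fun ω => if X o ω = x g then a * (Y o ω) ^ 2 + b * (Y o ω) + cc else 0) ℙ := by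
    intro g a b cc
    rw [hsplit]
    exact (((i2 g).const_mul a).add ((i1 g).const_mul b)).add ((i0 g).const_mul cc)
  have masterVal : ∀ (g : Fin G) (a b cc : ℝ),
      ∫ ω, (if X o ω = x g then a * (Y o ω) ^ 2 + b * (Y o ω) + cc else 0) ∂ℙ
        = a * (∫ ω, (if X o ω = x g then (Y o ω) ^ 2 else 0) ∂ℙ)
          + b * (μ g * π g) + cc * π g := by
    intro g a b cc
    have hA : Integrable (fun ω => a * (if X o ω = x g then (Y o ω) ^ 2 else 0)) ℙ :=
      (i2 g).const_mul a
    have hB : Integrable (fun ω => b * (if X o ω = x g then Y o ω else 0)) ℙ :=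
      (i1 g).const_mul b
    have hCc : Integrable (fun ω => cc * (if X o ω = x g then (1 : ℝ) else 0)) ℙ :=
      (i0 g).const_mul cc
    have hAB : Integrable (fun ω => a * (if X o ω = x g then (Y o ω) ^ 2 else 0)
        + b * (if X o ω = x g then Y o ω else 0)) ℙ := hA.add hB
    rw [hsplit, integral_add hAB hCc, integral_add hA hB,
      integral_const_mul, integral_const_mul, integral_const_mul, hJ1 g, hJ0 g]
  have hI2 : ∀ g, ∫ ω, (if X o ω = x g then (Y o ω) ^ 2 else 0) ∂ℙ
      = σsq g * π g + (μ g) ^ 2 * π g := by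
    intro g
    have h1 : σsq g * π g
        = ∫ ω, (if X o ω = x g then (Y o ω - μ g) ^ 2 else 0) ∂ℙ := by
      rw [hσsq g, div_mul_cancel₀ _ (hπpos g).ne']
    have h2 : (fun ω => if X o ω = x g then (Y o ω - μ g) ^ 2 else 0)
        = fun ω => if X o ω = x g then
            1 * (Y o ω) ^ 2 + (-2 * μ g) * (Y o ω) + (μ g) ^ 2 else 0 := by
      funext ω
      split_ifs with h
      · ring
      · rfl
    rw [h2, masterVal g] at h1
    linarith
  -- values for the residual function F at index 0
  have hB0int : ∀ g, Integrable (fun ω => F g (X o ω, Y o ω)) ℙ := by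
    intro g
    have h2 : (fun ω => F g (X o ω, Y o ω))
        = fun ω => if X o ω = x g then 0 * (Y o ω) ^ 2 + 1 * (Y o ω) + (-(C g)) else 0 := by
      funext ω
      simp only [hFdef]
      split_ifs with h
      · ring
      · rfl
    rw [h2]
    exact masterInt g 0 1 (-(C g))
  have hB0val : ∀ g, ∫ ω, F g (X o ω, Y o ω) ∂ℙ = π g * δ g := by
    intro g
    have h2 : (fun ω => F g (X o ω, Y o ω))
        = fun ω => if X o ω = x g then 0 * (Y o ω) ^ 2 + 1 * (Y o ω) + (-(C g)) else 0 := by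
      funext ω
      simp only [hFdef]
      split_ifs with h
      · ring
      · rfl
    rw [h2, masterVal g, hδ g]
    ring
  have hS0int : ∀ g, Integrable (fun ω => (F g (X o ω, Y o ω)) ^ 2) ℙ := by
    intro g
    have h2 : (fun ω => (F g (X o ω, Y o ω)) ^ 2)
        = fun ω => if X o ω = x g then
            1 * (Y o ω) ^ 2 + (-2 * C g) * (Y o ω) + (C g) ^ 2 else 0 := by
      funext ω
      simp only [hFdef]
      split_ifs with h
      · ring
      · simp
    rw [h2]
    exact masterInt g 1 (-2 * C g) ((C g) ^ 2)
  have hS0val : ∀ g, ∫ ω, (F g (X o ω, Y o ω)) ^ 2 ∂ℙ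
      = π g * (σsq g + (δ g) ^ 2) := by
    intro g
    have h2 : (fun ω => (F g (X o ω, Y o ω)) ^ 2)
        = fun ω => if X o ω = x g then
            1 * (Y o ω) ^ 2 + (-2 * C g) * (Y o ω) + (C g) ^ 2 else 0 := by
      funext ω
      simp only [hFdef]
      split_ifs with h
      · ring
      · simp
    rw [h2, masterVal g, hI2 g, hδ g]
    ring
  -- transport to all indices
  have hZint : ∀ g i, Integrable (Z g i) ℙ := fun g i =>
    ((htrans (F g) (hFmeas g) i).1).mpr (hB0int g)
  have hZval : ∀ g i, ∫ ω, Z g i ω ∂ℙ = π g * δ g := fun g i =>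
    ((htrans (F g) (hFmeas g) i).2).trans (hB0val g)
  have hFsqmeas : ∀ g, Measurable (fun p => (F g p) ^ 2) := fun g =>
    (hFmeas g).pow_const 2
  have hZsqint : ∀ g i, Integrable (fun ω => (Z g i ω) ^ 2) ℙ := fun g i =>
    ((htrans (fun p => (F g p) ^ 2) (hFsqmeas g) i).1).mpr (hS0int g)
  have hZsqval : ∀ g i, ∫ ω, (Z g i ω) ^ 2 ∂ℙ = π g * (σsq g + (δ g) ^ 2) := fun g i =>
    ((htrans (fun p => (F g p) ^ 2) (hFsqmeas g) i).2).trans (hS0val g)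
  -- independence
  have hZindep : ∀ g (i j : Fin N), i ≠ j → IndepFun (Z g i) (Z g j) ℙ := by
    intro g i j hij
    exact (hindep.indepFun hij).comp (hFmeas g) (hFmeas g)
  have hprodint : ∀ g (i j : Fin N), Integrable (fun ω => Z g i ω * Z g j ω) ℙ := by
    intro g i j
    by_cases h : i = j
    · subst h
      have := hZsqint g i
      simpa [pow_two] using this
    · exact (hZindep g i j h).integrable_mul (hZint g i) (hZint g j)
  have hprodval : ∀ g (i j : Fin N),
      ∫ ω, Z g i ω * Z g j ω ∂ℙ
        = if i = j then π g * (σsq g + (δ g) ^ 2) else (π g * δ g) ^ 2 := by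
    intro g i j
    split_ifs with h
    · subst h
      have := hZsqval g i
      rw [← this]
      congr 1
      funext ω
      ring
    · have hmul := (hZindep g i j h).integral_mul_eq_mul_integral (hZint g i).aestronglyMeasurable (hZint g j).aestronglyMeasurable
      have : ∫ ω, Z g i ω * Z g j ω ∂ℙ = (∫ ω, Z g i ω ∂ℙ) * ∫ ω, Z g j ω ∂ℙ := hmul
      rw [this, hZval g i, hZval g j]
      ring
  -- expand square of sum
  have hsumsq : ∀ g, (fun ω => (∑ i, Z g i ω) ^ 2)
      = fun ω => ∑ i, ∑ j, Z g i ω * Z g j ω := by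
    intro g
    funext ω
    rw [sq, Finset.sum_mul_sum]
  have hsqsumint : ∀ g, Integrable (fun ω => (∑ i, Z g i ω) ^ 2) ℙ := by
    intro g
    rw [hsumsq g]
    exact integrable_finset_sum _ fun i _ => integrable_finset_sum _ fun j _ => hprodint g i j
  have key : ∀ g, ∫ ω, (∑ i, Z g i ω) ^ 2 ∂ℙ
      = (N : ℝ) * (π g * (σsq g + (δ g) ^ 2))
        + (N : ℝ) * ((N : ℝ) - 1) * (π g * δ g) ^ 2 := by
    intro g
    rw [hsumsq g, integral_finset_sum _
      (fun i _ => integrable_finset_sum _ fun j _ => hprodint g i j)]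
    have hrow : ∀ i : Fin N,
        ∫ ω, (∑ j, Z g i ω * Z g j ω) ∂ℙ
          = π g * (σsq g + (δ g) ^ 2) + ((N : ℝ) - 1) * (π g * δ g) ^ 2 := by
      intro i
      rw [integral_finset_sum _ (fun j _ => hprodint g i j)]
      have hterm : ∀ j : Fin N, ∫ ω, Z g i ω * Z g j ω ∂ℙ
          = (π g * δ g) ^ 2 + (if i = j then
              π g * (σsq g + (δ g) ^ 2) - (π g * δ g) ^ 2 else 0) := by
        intro j
        rw [hprodval g i j]
        split_ifs <;> ring
      rw [Finset.sum_congr rfl fun j _ => hterm j, Finset.sum_add_distrib,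
        Finset.sum_const, Finset.sum_ite_eq]
      simp [card_univ, nsmul_eq_mul]
      ring
    rw [Finset.sum_congr rfl fun i _ => hrow i, Finset.sum_const]
    simp [card_univ, nsmul_eq_mul]
    ring
  -- main computation
  have hmain : (fun ω => (1 / (N : ℝ)) *
      ∑ g, (c g) ^ 2 * (∑ i, (if X i ω = x g then u i ω else 0)) ^ 2)
      = fun ω => (1 / (N : ℝ)) * ∑ g, (c g) ^ 2 * (∑ i, Z g i ω) ^ 2 := by
    funext ω
    congr 1
    exact Finset.sum_congr rfl fun g _ => by rw [Finset.sum_congr rfl fun i _ => hZ g i ω]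
  rw [hmain, integral_const_mul, integral_finset_sum _
    (fun g _ => (hsqsumint g).const_mul ((c g) ^ 2))]
  have hfin : ∀ g : Fin G, ∫ ω, (c g) ^ 2 * (∑ i, Z g i ω) ^ 2 ∂ℙ
      = (c g) ^ 2 * ((N : ℝ) * (π g * (σsq g + (δ g) ^ 2))
        + (N : ℝ) * ((N : ℝ) - 1) * (π g * δ g) ^ 2) := by
    intro g
    rw [integral_const_mul, key g]
  rw [Finset.sum_congr rfl fun g _ => hfin g, Finset.mul_sum, Finset.mul_sum,
    ← Finset.sum_add_distrib]
  refine Finset.sum_congr rfl fun g _ => ?_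
  field_simp
end

section
/- Let ε_i = Y_i − E[Y_i | X_i], let a_1, …, a_G be real constants, and define S = (1/N) Σ_{1 ≤ j < i ≤ N} Σ_{g=1}^G a_g 1{X_i = x_g} 1{X_j = x_g} ε_i ε_j. Then E[S] = 0 and Var(S) = ((N−1)/(2N)) Σ_{g=1}^G a_g² π_g² σ_g⁴. -/
open MeasureTheory ProbabilityTheory Finset

set_option linter.unusedSectionVars false
set_option maxHeartbeats 1000000

section aux
variable {ι : Type*} [Fintype ι] [DecidableEq ι] {α : Type*} [MeasurableSpace α]
  (μ : Measure α) [IsProbabilityMeasure μ]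

lemma aux_integral_pi (f : ι → α → ℝ) :
    ∫ z : ι → α, ∏ i, f i (z i) ∂Measure.pi (fun _ => μ) = ∏ i, ∫ p, f i p ∂μ := by
  letI : MeasureSpace α := ⟨μ⟩
  haveI : SigmaFinite (volume : Measure α) := inferInstanceAs (SigmaFinite μ)
  have hv : (volume : Measure (ι → α)) = Measure.pi fun _ => μ := volume_pi
  rw [← hv]
  rw [hv]; exact integral_fintype_prod_eq_prod f

lemma aux_integrable_pi (f : ι → α → ℝ) (hf : ∀ i, Integrable (f i) μ) :
    Integrable (fun z : ι → α => ∏ i, f i (z i)) (Measure.pi (fun _ => μ)) := by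
  letI : MeasureSpace α := ⟨μ⟩
  haveI : SigmaFinite (volume : Measure α) := inferInstanceAs (SigmaFinite μ)
  have hv : (volume : Measure (ι → α)) = Measure.pi fun _ => μ := volume_pi
  rw [← hv]
  exact Integrable.fintype_prod hf

lemma aux_l2_mul {f g : α → ℝ} (hf : MemLp f 2 μ) (hg : MemLp g 2 μ) :
    Integrable (fun p => f p * g p) μ := by
  have h : Integrable (fun p => (f p ^ 2 + g p ^ 2)) μ :=
    hf.integrable_sq.add hg.integrable_sq
  refine h.mono' (hf.aestronglyMeasurable.mul hg.aestronglyMeasurable) ?_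
  filter_upwards with p
  rw [Real.norm_eq_abs, abs_mul]
  nlinarith [abs_nonneg (f p), abs_nonneg (g p), sq_abs (f p), sq_abs (g p),
    sq_nonneg (|f p| - |g p|)]

lemma aux_pair_integrable (i j : ι) (hij : i ≠ j) {u v : α → ℝ}
    (hu : Integrable u μ) (hv : Integrable v μ) :
    Integrable (fun z : ι → α => u (z i) * v (z j)) (Measure.pi (fun _ => μ)) := by
  have heq : ∀ z : ι → α, u (z i) * v (z j)
      = ∏ m, ((if i = m then u (z m) else 1) * (if j = m then v (z m) else 1)) := by
    intro z
    rw [Finset.prod_mul_distrib, Finset.prod_ite_eq, Finset.prod_ite_eq]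
    simp
  refine (aux_integrable_pi μ
    (fun m p => (if i = m then u p else 1) * (if j = m then v p else 1)) ?_).congr
    (Filter.Eventually.of_forall fun z => (heq z).symm)
  intro m
  rcases eq_or_ne i m with rfl | him
  · simp only [if_pos rfl, if_neg (Ne.symm hij), mul_one]
    exact hu
  rcases eq_or_ne j m with rfl | hjm
  · simp only [if_neg him, if_pos rfl, one_mul]
    exact hv
  · simp only [if_neg him, if_neg hjm, mul_one]
    exact integrable_const 1

lemma aux_pair_integral (i j : ι) (hij : i ≠ j) (u v : α → ℝ) :
    ∫ z : ι → α, u (z i) * v (z j) ∂Measure.pi (fun _ => μ)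
      = (∫ p, u p ∂μ) * (∫ p, v p ∂μ) := by
  have heq : ∀ z : ι → α, u (z i) * v (z j)
      = ∏ m, ((if i = m then u (z m) else 1) * (if j = m then v (z m) else 1)) := by
    intro z
    rw [Finset.prod_mul_distrib, Finset.prod_ite_eq, Finset.prod_ite_eq]
    simp
  calc ∫ z : ι → α, u (z i) * v (z j) ∂Measure.pi (fun _ => μ)
      = ∫ z : ι → α, ∏ m, ((if i = m then u (z m) else 1) * (if j = m then v (z m) else 1))
          ∂Measure.pi (fun _ => μ) := by simp_rw [heq]
    _ = ∏ m, ∫ p, ((if i = m then u p else 1) * (if j = m then v p else 1)) ∂μ :=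
        aux_integral_pi μ (fun m p => (if i = m then u p else 1) * (if j = m then v p else 1))
    _ = ∏ m, ((if i = m then ∫ p, u p ∂μ else 1) * (if j = m then ∫ p, v p ∂μ else 1)) := by
        refine Finset.prod_congr rfl fun m _ => ?_
        rcases eq_or_ne i m with rfl | him
        · simp only [if_pos rfl, if_neg (Ne.symm hij), mul_one]
          simp
        rcases eq_or_ne j m with rfl | hjm
        · simp only [if_neg him, if_pos rfl, one_mul]
          simp
        · simp only [if_neg him, if_neg hjm, mul_one, integral_const, measure_univ,
            ENNReal.toReal_one, probReal_univ, one_smul]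
    _ = (∫ p, u p ∂μ) * (∫ p, v p ∂μ) := by
        rw [Finset.prod_mul_distrib, Finset.prod_ite_eq, Finset.prod_ite_eq]
        simp

lemma aux_quad (i j k l : ι) (hij : i ≠ j) (hkl : k ≠ l) {u v : α → ℝ}
    (hu : MemLp u 2 μ) (hv : MemLp v 2 μ) :
    Integrable (fun z : ι → α => u (z i) * u (z j) * (v (z k) * v (z l)))
      (Measure.pi (fun _ => μ)) ∧
    ∫ z : ι → α, u (z i) * u (z j) * (v (z k) * v (z l)) ∂Measure.pi (fun _ => μ)
      = ∏ m, (if i = m ∨ j = m then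
            (if k = m ∨ l = m then ∫ p, u p * v p ∂μ else ∫ p, u p ∂μ)
          else (if k = m ∨ l = m then ∫ p, v p ∂μ else 1)) := by
  have hU : ∀ (m : ι) (p : α), (if i = m then u p else 1) * (if j = m then u p else 1)
      = (if i = m ∨ j = m then u p else 1) := by
    intro m p
    rcases eq_or_ne i m with rfl | him
    · rw [if_pos rfl, if_neg (Ne.symm hij), if_pos (Or.inl rfl), mul_one]
    rcases eq_or_ne j m with rfl | hjm
    · rw [if_neg him, if_pos rfl, one_mul, if_pos (Or.inr rfl)]
    · rw [if_neg him, if_neg hjm, if_neg (by tauto), mul_one]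
  have hV : ∀ (m : ι) (p : α), (if k = m then v p else 1) * (if l = m then v p else 1)
      = (if k = m ∨ l = m then v p else 1) := by
    intro m p
    rcases eq_or_ne k m with rfl | hkm
    · rw [if_pos rfl, if_neg (Ne.symm hkl), if_pos (Or.inl rfl), mul_one]
    rcases eq_or_ne l m with rfl | hlm
    · rw [if_neg hkm, if_pos rfl, one_mul, if_pos (Or.inr rfl)]
    · rw [if_neg hkm, if_neg hlm, if_neg (by tauto), mul_one]
  have heq : ∀ z : ι → α,
      (∏ m, ((if i = m ∨ j = m then u (z m) else 1) * (if k = m ∨ l = m then v (z m) else 1)))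
        = u (z i) * u (z j) * (v (z k) * v (z l)) := by
    intro z
    calc (∏ m, ((if i = m ∨ j = m then u (z m) else 1)
            * (if k = m ∨ l = m then v (z m) else 1)))
        = ∏ m, ((if i = m then u (z m) else 1) * (if j = m then u (z m) else 1)
            * ((if k = m then v (z m) else 1) * (if l = m then v (z m) else 1))) :=
          Finset.prod_congr rfl fun m _ => by rw [hU, hV]
      _ = _ := by
          rw [Finset.prod_mul_distrib, Finset.prod_mul_distrib, Finset.prod_mul_distrib,
            Finset.prod_ite_eq, Finset.prod_ite_eq, Finset.prod_ite_eq, Finset.prod_ite_eq]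
          simp
  have hPint : ∀ m : ι, Integrable
      (fun p => (if i = m ∨ j = m then u p else 1) * (if k = m ∨ l = m then v p else 1)) μ := by
    intro m
    by_cases hA : i = m ∨ j = m <;> by_cases hB : k = m ∨ l = m
    · simp only [if_pos hA, if_pos hB]; exact aux_l2_mul μ hu hv
    · simp only [if_pos hA, if_neg hB, mul_one]; exact hu.integrable one_le_two
    · simp only [if_neg hA, if_pos hB, one_mul]; exact hv.integrable one_le_two
    · simp only [if_neg hA, if_neg hB, mul_one]; exact integrable_const 1
  have hPval : ∀ m : ι,
      (∫ p, (if i = m ∨ j = m then u p else 1) * (if k = m ∨ l = m then v p else 1) ∂μ)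
        = (if i = m ∨ j = m then
            (if k = m ∨ l = m then ∫ p, u p * v p ∂μ else ∫ p, u p ∂μ)
          else (if k = m ∨ l = m then ∫ p, v p ∂μ else 1)) := by
    intro m
    by_cases hA : i = m ∨ j = m <;> by_cases hB : k = m ∨ l = m
    · simp only [if_pos hA, if_pos hB]
    · simp only [if_pos hA, if_neg hB, mul_one]
    · simp only [if_neg hA, if_pos hB, one_mul]
    · simp only [if_neg hA, if_neg hB, mul_one]
      simp
  constructor
  · exact (aux_integrable_pi μ _ hPint).congr (Filter.Eventually.of_forall fun z => heq z)
  · calc ∫ z : ι → α, u (z i) * u (z j) * (v (z k) * v (z l)) ∂Measure.pi (fun _ => μ)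
        = ∫ z : ι → α, (∏ m, ((if i = m ∨ j = m then u (z m) else 1)
            * (if k = m ∨ l = m then v (z m) else 1))) ∂Measure.pi (fun _ => μ) := by
          simp_rw [heq]
      _ = ∏ m, ∫ p, ((if i = m ∨ j = m then u p else 1)
            * (if k = m ∨ l = m then v p else 1)) ∂μ :=
          aux_integral_pi μ (fun m p => (if i = m ∨ j = m then u p else 1)
            * (if k = m ∨ l = m then v p else 1))
      _ = _ := Finset.prod_congr rfl fun m _ => hPval m

lemma aux_prod_pair (i j : ι) (hij : i ≠ j) (c : ℝ) :
    (∏ m, (if i = m ∨ j = m then c else 1)) = c * c := by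
  have : ∀ m : ι, (if i = m ∨ j = m then c else 1)
      = (if i = m then c else 1) * (if j = m then c else 1) := by
    intro m
    rcases eq_or_ne i m with rfl | him
    · rw [if_pos (Or.inl rfl), if_pos rfl, if_neg (Ne.symm hij), mul_one]
    rcases eq_or_ne j m with rfl | hjm
    · rw [if_pos (Or.inr rfl), if_neg him, if_pos rfl, one_mul]
    · rw [if_neg (by tauto), if_neg him, if_neg hjm, mul_one]
  rw [Finset.prod_congr rfl fun m _ => this m, Finset.prod_mul_distrib,
    Finset.prod_ite_eq, Finset.prod_ite_eq]
  simp

end aux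
/-- Mean and variance of the cross-term C₁₂ in the proof of Theorem 2 of the paper. -/
theorem cross_term_mean_and_variance
    {Ω : Type*} [MeasureSpace Ω] [IsProbabilityMeasure (ℙ : Measure Ω)]
    (N G : ℕ) (hN : 0 < N) (hG : 0 < G)
    (X Y : Fin N → Ω → ℝ)
    (hXmeas : ∀ i, Measurable (X i)) (hYmeas : ∀ i, Measurable (Y i))
    (hindep : iIndepFun (fun i ω => (X i ω, Y i ω)) ℙ)
    (hident : ∀ i, Measure.map (fun ω => (X i ω, Y i ω)) ℙ
      = Measure.map (fun ω => (X ⟨0, hN⟩ ω, Y ⟨0, hN⟩ ω)) ℙ)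
    (x : Fin G → ℝ) (hxinj : Function.Injective x)
    (hsupp : ∀ i ω, X i ω ∈ Set.range x)
    (π : Fin G → ℝ)
    (hπ : ∀ g, π g = (ℙ {ω | X ⟨0, hN⟩ ω = x g}).toReal)
    (hπpos : ∀ g, 0 < π g)
    (hY2 : Integrable (fun ω => (Y ⟨0, hN⟩ ω) ^ 2) ℙ)
    (μ σsq : Fin G → ℝ)
    (hμ : ∀ g, μ g =
      (∫ ω, (if X ⟨0, hN⟩ ω = x g then Y ⟨0, hN⟩ ω else 0) ∂ℙ) / π g)
    (hσsq : ∀ g, σsq g =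
      (∫ ω, (if X ⟨0, hN⟩ ω = x g then (Y ⟨0, hN⟩ ω - μ g) ^ 2 else 0) ∂ℙ) / π g)
    (ε : Fin N → Ω → ℝ)
    (hε : ∀ i ω g, X i ω = x g → ε i ω = Y i ω - μ g)
    (a : Fin G → ℝ)
    (S : Ω → ℝ)
    (hS : ∀ ω, S ω = (1 / (N : ℝ)) * ∑ i, ∑ j,
      if j < i then
        (∑ g, a g * (if X i ω = x g then (1:ℝ) else 0) * (if X j ω = x g then (1:ℝ) else 0))
          * ε i ω * ε j ω
      else 0) :
    (∫ ω, S ω ∂ℙ) = 0 ∧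
    variance S ℙ = (((N : ℝ) - 1) / (2 * N)) * ∑ g, (a g) ^ 2 * (π g) ^ 2 * (σsq g) ^ 2 := by
  classical
  set i0 : Fin N := ⟨0, hN⟩ with hi0
  have hpairmeas : ∀ i, Measurable (fun ω => (X i ω, Y i ω)) :=
    fun i => (hXmeas i).prodMk (hYmeas i)
  set ν : Measure (ℝ × ℝ) := Measure.map (fun ω => (X i0 ω, Y i0 ω)) ℙ with hν
  haveI : IsProbabilityMeasure ν := Measure.isProbabilityMeasure_map (hpairmeas i0).aemeasurable
  set PP : Measure (Fin N → ℝ × ℝ) := Measure.pi (fun _ => ν) with hPP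
  set Φ : Ω → Fin N → ℝ × ℝ := fun ω i => (X i ω, Y i ω) with hΦdef
  have hΦ : Measurable Φ := measurable_pi_lambda _ hpairmeas
  have hlaw : Measure.map Φ ℙ = PP := by
    rw [hPP]
    refine (Measure.pi_eq fun s hs => ?_).symm
    rw [Measure.map_apply hΦ (MeasurableSet.univ_pi hs)]
    have hpre : Φ ⁻¹' Set.pi Set.univ s
        = ⋂ i ∈ Finset.univ, (fun ω => (X i ω, Y i ω)) ⁻¹' s i := by
      ext ω; simp [hΦdef, Set.mem_pi]
    rw [hpre, hindep.measure_inter_preimage_eq_mul Finset.univ (fun i _ => hs i)]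
    refine Finset.prod_congr rfl fun i _ => ?_
    rw [← Measure.map_apply (hpairmeas i) (hs i), hident i, hν]
  -- the function W
  set W : Fin G → ℝ × ℝ → ℝ :=
    (fun g p => (if p.1 = x g then (1:ℝ) else 0) * (p.2 - μ g)) with hWdef
  have hWmeas : ∀ g, Measurable (W g) := by
    intro g
    refine Measurable.mul ?_ (measurable_snd.sub measurable_const)
    exact Measurable.ite (measurable_fst (measurableSet_singleton (x g)))
      measurable_const measurable_const
  have hY0sm : AEStronglyMeasurable (Y i0) ℙ := (hYmeas i0).aestronglyMeasurable
  have hY0L2 : MemLp (Y i0) 2 ℙ := (memLp_two_iff_integrable_sq hY0sm).2 hY2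
  have hY0int : Integrable (Y i0) ℙ := hY0L2.integrable one_le_two
  have hA : ∀ g, MeasurableSet {ω | X i0 ω = x g} :=
    fun g => hXmeas i0 (measurableSet_singleton (x g))
  have hπne : ∀ g, π g ≠ 0 := fun g => (hπpos g).ne'
  -- integrability of indicator-type functions over ℙ
  have hind_int : ∀ (g : Fin G) (c : ℝ),
      Integrable (fun ω => if X i0 ω = x g then c else 0) ℙ := by
    intro g c
    refine ((integrable_const c).indicator (hA g)).congr
      (Filter.Eventually.of_forall fun ω => ?_)
    by_cases h : X i0 ω = x g <;> simp [Set.indicator_apply, h]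
  have hindY_int : ∀ g : Fin G,
      Integrable (fun ω => if X i0 ω = x g then Y i0 ω else 0) ℙ := by
    intro g
    refine (hY0int.indicator (hA g)).congr (Filter.Eventually.of_forall fun ω => ?_)
    by_cases h : X i0 ω = x g <;> simp [Set.indicator_apply, h]
  have hint_ind : ∀ (g : Fin G) (c : ℝ),
      ∫ ω, (if X i0 ω = x g then c else 0) ∂ℙ = c * π g := by
    intro g c
    rw [hπ g]
    have : (fun ω => if X i0 ω = x g then c else 0)
        = Set.indicator {ω | X i0 ω = x g} (fun _ => c) := by
      funext ω; by_cases h : X i0 ω = x g <;> simp [Set.indicator_apply, h]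
    rw [this, integral_indicator_const c (hA g), smul_eq_mul, mul_comm]
    rfl
  have hμint : ∀ g : Fin G,
      ∫ ω, (if X i0 ω = x g then Y i0 ω else 0) ∂ℙ = μ g * π g := by
    intro g
    rw [hμ g, div_mul_cancel₀ _ (hπne g)]
  have hσint : ∀ g : Fin G,
      ∫ ω, (if X i0 ω = x g then (Y i0 ω - μ g) ^ 2 else 0) ∂ℙ = σsq g * π g := by
    intro g
    rw [hσsq g, div_mul_cancel₀ _ (hπne g)]
  -- mean of W g under ν
  have hW1 : ∀ g, ∫ p, W g p ∂ν = 0 := by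
    intro g
    rw [hν, integral_map (hpairmeas i0).aemeasurable (hWmeas g).aestronglyMeasurable]
    have hpt : ∀ ω, W g (X i0 ω, Y i0 ω)
        = (if X i0 ω = x g then Y i0 ω else 0) - (if X i0 ω = x g then μ g else 0) := by
      intro ω; by_cases h : X i0 ω = x g <;> simp [hWdef, h]
    calc ∫ ω, W g (X i0 ω, Y i0 ω) ∂ℙ
        = ∫ ω, ((if X i0 ω = x g then Y i0 ω else 0) - (if X i0 ω = x g then μ g else 0)) ∂ℙ := by
          simp_rw [hpt]
      _ = (∫ ω, (if X i0 ω = x g then Y i0 ω else 0) ∂ℙ)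
          - ∫ ω, (if X i0 ω = x g then μ g else 0) ∂ℙ :=
          integral_sub (hindY_int g) (hind_int g (μ g))
      _ = 0 := by rw [hμint g, hint_ind g (μ g), sub_self]
  -- W g is in L² of ν
  have hsnd2 : Integrable (fun p : ℝ × ℝ => p.2 ^ 2) ν := by
    rw [hν]
    exact (integrable_map_measure (measurable_snd.pow_const 2).aestronglyMeasurable
      (hpairmeas i0).aemeasurable).2 hY2
  have hsndL2 : MemLp (fun p : ℝ × ℝ => p.2) 2 ν :=
    (memLp_two_iff_integrable_sq measurable_snd.aestronglyMeasurable).2 hsnd2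
  have hmemW : ∀ g, MemLp (W g) 2 ν := by
    intro g
    have hsub : MemLp (fun p : ℝ × ℝ => p.2 - μ g) 2 ν := hsndL2.sub (memLp_const _)
    refine (memLp_two_iff_integrable_sq (hWmeas g).aestronglyMeasurable).2 ?_
    refine hsub.integrable_sq.mono'
      (((hWmeas g).pow_const 2).aestronglyMeasurable) ?_
    filter_upwards with p
    rw [Real.norm_eq_abs]
    by_cases h : p.1 = x g
    · simp only [hWdef, if_pos h, one_mul]
      rw [abs_of_nonneg (sq_nonneg _)]
    · simp only [hWdef, if_neg h, zero_mul]
      simpa using sq_nonneg (p.2 - μ g)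
  have hWint : ∀ g, Integrable (W g) ν := fun g => (hmemW g).integrable one_le_two
  -- second moments of W under ν
  have hWW : ∀ g₁ g₂ : Fin G, ∫ p, W g₁ p * W g₂ p ∂ν
      = if g₁ = g₂ then π g₁ * σsq g₁ else 0 := by
    intro g₁ g₂
    rcases eq_or_ne g₁ g₂ with rfl | hne
    · rw [if_pos rfl, hν,
        integral_map (f := fun p => W g₁ p * W g₁ p) (hpairmeas i0).aemeasurable
          ((hWmeas g₁).mul (hWmeas g₁)).aestronglyMeasurable]
      have hpt : ∀ ω, W g₁ (X i0 ω, Y i0 ω) * W g₁ (X i0 ω, Y i0 ω)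
          = (if X i0 ω = x g₁ then (Y i0 ω - μ g₁) ^ 2 else 0) := by
        intro ω; by_cases h : X i0 ω = x g₁ <;> simp [hWdef, h, sq]
      calc ∫ ω, W g₁ (X i0 ω, Y i0 ω) * W g₁ (X i0 ω, Y i0 ω) ∂ℙ
          = ∫ ω, (if X i0 ω = x g₁ then (Y i0 ω - μ g₁) ^ 2 else 0) ∂ℙ := by simp_rw [hpt]
        _ = σsq g₁ * π g₁ := hσint g₁
        _ = π g₁ * σsq g₁ := mul_comm _ _
    · rw [if_neg hne]
      have hpt : ∀ p : ℝ × ℝ, W g₁ p * W g₂ p = 0 := by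
        intro p
        by_cases h1 : p.1 = x g₁
        · have h2 : p.1 ≠ x g₂ := by
            rw [h1]; exact fun e => hne (hxinj e)
          have h3 : x g₁ ≠ x g₂ := fun e => hne (hxinj e)
          simp [hWdef, h1, h2, h3]
        · simp [hWdef, h1]
      simp_rw [hpt]
      exact integral_zero _ _
  -- V and F on the product space
  set V : Fin N → Fin N → (Fin N → ℝ × ℝ) → ℝ :=
    (fun i j z => ∑ g, a g * (W g (z i) * W g (z j))) with hVdef
  set F : (Fin N → ℝ × ℝ) → ℝ :=
    (fun z => (1 / (N : ℝ)) * ∑ i, ∑ j, if j < i then V i j z else 0) with hFdef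
  have hVmeas : ∀ i j, Measurable (V i j) := by
    intro i j
    refine Finset.measurable_sum _ fun g _ => ?_
    exact (((hWmeas g).comp (measurable_pi_apply i)).mul
      ((hWmeas g).comp (measurable_pi_apply j))).const_mul _
  have hFmeas : Measurable F := by
    refine (Finset.measurable_sum _ fun i _ => Finset.measurable_sum _ fun j _ => ?_).const_mul _
    by_cases h : j < i
    · simpa only [if_pos h] using hVmeas i j
    · simp only [if_neg h]; exact measurable_const
  -- S = F ∘ Φ
  have hkey : ∀ (i : Fin N) (ω : Ω) (g : Fin G),
      (if X i ω = x g then (1:ℝ) else 0) * ε i ω = W g (X i ω, Y i ω) := by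
    intro i ω g
    by_cases hc : X i ω = x g
    · rw [hε i ω g hc]
    · simp [hWdef, hc]
  have hSF : ∀ ω, S ω = F (Φ ω) := by
    intro ω
    rw [hS ω, hFdef]
    refine congrArg _ (Finset.sum_congr rfl fun i _ => Finset.sum_congr rfl fun j _ => ?_)
    by_cases hji : j < i
    · rw [if_pos hji, if_pos hji, hVdef]
      rw [Finset.sum_mul, Finset.sum_mul]
      refine Finset.sum_congr rfl fun g _ => ?_
      calc a g * (if X i ω = x g then (1:ℝ) else 0) * (if X j ω = x g then (1:ℝ) else 0)
            * ε i ω * ε j ω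
          = a g * (((if X i ω = x g then (1:ℝ) else 0) * ε i ω)
            * ((if X j ω = x g then (1:ℝ) else 0) * ε j ω)) := by ring
        _ = a g * (W g (Φ ω i) * W g (Φ ω j)) := by rw [hkey i ω g, hkey j ω g]
    · rw [if_neg hji, if_neg hji]
  -- transfer of integrals to the product space
  have htrans : ∀ (H : (Fin N → ℝ × ℝ) → ℝ), Measurable H →
      ∫ ω, H (Φ ω) ∂ℙ = ∫ z, H z ∂PP := by
    intro H hH
    rw [← hlaw, integral_map hΦ.aemeasurable hH.aestronglyMeasurable]
  -- integrability and mean of V i j over PP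
  have hVint : ∀ i j : Fin N, i ≠ j → Integrable (V i j) PP := by
    intro i j hij
    rw [hVdef, hPP]
    refine integrable_finset_sum _ fun g _ => ?_
    exact (aux_pair_integrable ν i j hij (hWint g) (hWint g)).const_mul _
  have hEV : ∀ i j : Fin N, i ≠ j → ∫ z, V i j z ∂PP = 0 := by
    intro i j hij
    rw [hVdef, hPP]
    rw [integral_finset_sum _ fun g _ =>
      ((aux_pair_integrable ν i j hij (hWint g) (hWint g)).const_mul _)]
    refine Finset.sum_eq_zero fun g _ => ?_
    rw [integral_const_mul, aux_pair_integral ν i j hij (W g) (W g), hW1 g,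
      mul_zero, mul_zero]
  -- integrability of the if-terms
  have hTint : ∀ i j : Fin N, Integrable (fun z => if j < i then V i j z else 0) PP := by
    intro i j
    by_cases h : j < i
    · simpa only [if_pos h] using hVint i j h.ne'
    · simp only [if_neg h]; exact integrable_const 0
  -- part 1 : mean of S
  have hmean : ∫ ω, S ω ∂ℙ = 0 := by
    calc ∫ ω, S ω ∂ℙ = ∫ ω, F (Φ ω) ∂ℙ := integral_congr_ae (.of_forall hSF)
      _ = ∫ z, F z ∂PP := htrans F hFmeas
      _ = 0 := by
          rw [hFdef]
          simp only
          rw [integral_const_mul,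
            integral_finset_sum _ fun i _ => integrable_finset_sum _ fun j _ => hTint i j]
          have : ∀ i : Fin N, (∑ j : Fin N, ∫ z, (if j < i then V i j z else 0) ∂PP) = 0 := by
            intro i
            refine Finset.sum_eq_zero fun j _ => ?_
            by_cases h : j < i
            · simp only [if_pos h]; exact hEV i j h.ne'
            · simp only [if_neg h, integral_zero]
          have h2 : ∀ i : Fin N,
              ∫ z, (∑ j : Fin N, if j < i then V i j z else 0) ∂PP = 0 := by
            intro i
            rw [integral_finset_sum _ fun j _ => hTint i j]
            exact this i
          rw [Finset.sum_congr rfl fun i _ => h2 i, Finset.sum_const, smul_zero, mul_zero]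
  -- variance part
  set C : ℝ := ∑ g, (a g) ^ 2 * (π g * σsq g) ^ 2 with hCdef
  have hVVexpand : ∀ (i j k l : Fin N) (z : Fin N → ℝ × ℝ),
      V i j z * V k l z = ∑ g, ∑ h, (a g * a h) *
        (W g (z i) * W g (z j) * (W h (z k) * W h (z l))) := by
    intro i j k l z
    rw [hVdef]
    simp only
    rw [Finset.sum_mul]
    refine Finset.sum_congr rfl fun g _ => ?_
    rw [Finset.mul_sum]
    refine Finset.sum_congr rfl fun h _ => ?_
    ring
  have hVVint : ∀ i j k l : Fin N, i ≠ j → k ≠ l →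
      Integrable (fun z => V i j z * V k l z) PP := by
    intro i j k l hij hkl
    rw [hPP]
    have hInt0 : Integrable (fun z : Fin N → ℝ × ℝ => ∑ g, ∑ h, (a g * a h) *
        (W g (z i) * W g (z j) * (W h (z k) * W h (z l)))) (Measure.pi fun _ : Fin N => ν) :=
      integrable_finset_sum _ fun g _ => integrable_finset_sum _ fun h _ =>
        ((aux_quad ν i j k l hij hkl (hmemW g) (hmemW h)).1.const_mul _)
    exact hInt0.congr (Filter.Eventually.of_forall fun z => (hVVexpand i j k l z).symm)
  have hVVval : ∀ i j k l : Fin N, j < i → l < k →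
      ∫ z, V i j z * V k l z ∂PP = if i = k ∧ j = l then C else 0 := by
    intro i j k l hji hlk
    have hij : i ≠ j := hji.ne'
    have hkl : k ≠ l := hlk.ne'
    have hstep : ∫ z, V i j z * V k l z ∂PP
        = ∑ g, ∑ h, (a g * a h) *
            ∫ z, (W g (z i) * W g (z j) * (W h (z k) * W h (z l)))
              ∂(Measure.pi fun _ : Fin N => ν) := by
      calc ∫ z, V i j z * V k l z ∂PP
          = ∫ z, (∑ g, ∑ h, (a g * a h) *
              (W g (z i) * W g (z j) * (W h (z k) * W h (z l)))) ∂PP := by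
            simp_rw [hVVexpand]
        _ = _ := by
            rw [hPP]
            rw [integral_finset_sum _ fun g _ => integrable_finset_sum _ fun h _ =>
              ((aux_quad ν i j k l hij hkl (hmemW g) (hmemW h)).1.const_mul _)]
            refine Finset.sum_congr rfl fun g _ => ?_
            rw [integral_finset_sum _ fun h _ =>
              ((aux_quad ν i j k l hij hkl (hmemW g) (hmemW h)).1.const_mul _)]
            exact Finset.sum_congr rfl fun h _ => integral_const_mul _ _
    rw [hstep]
    by_cases hmatch : i = k ∧ j = l
    · obtain ⟨rfl, rfl⟩ := hmatch
      rw [if_pos ⟨rfl, rfl⟩]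
      have hquadval : ∀ g h : Fin G,
          ∫ z, (W g (z i) * W g (z j) * (W h (z i) * W h (z j)))
              ∂(Measure.pi fun _ : Fin N => ν)
            = (if g = h then π g * σsq g else 0) * (if g = h then π g * σsq g else 0) := by
        intro g h
        rw [(aux_quad ν i j i j hij hij (hmemW g) (hmemW h)).2]
        have hsimp : ∀ m : Fin N, (if i = m ∨ j = m then
              (if i = m ∨ j = m then ∫ p, W g p * W h p ∂ν else ∫ p, W g p ∂ν)
            else (if i = m ∨ j = m then ∫ p, W h p ∂ν else 1))
            = (if i = m ∨ j = m then ∫ p, W g p * W h p ∂ν else 1) := by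
          intro m; by_cases hm : i = m ∨ j = m <;> simp [hm]
        rw [Finset.prod_congr rfl fun m _ => hsimp m, aux_prod_pair i j hij, hWW g h]
      rw [Finset.sum_congr rfl fun g _ => Finset.sum_congr rfl fun h _ =>
        (by rw [hquadval g h] :
          (a g * a h) * ∫ z, (W g (z i) * W g (z j) * (W h (z i) * W h (z j)))
              ∂(Measure.pi fun _ : Fin N => ν)
            = (a g * a h) * ((if g = h then π g * σsq g else 0)
              * (if g = h then π g * σsq g else 0)))]
      rw [hCdef]
      refine Finset.sum_congr rfl fun g _ => ?_
      rw [Finset.sum_eq_single g]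
      · rw [if_pos rfl]; ring
      · intro h _ hne
        rw [if_neg (fun e => hne e.symm)]
        ring
      · intro habs; exact absurd (Finset.mem_univ g) habs
    · rw [if_neg hmatch]
      have hex : (¬ (k = i ∨ l = i)) ∨ (¬ (k = j ∨ l = j)) := by
        by_contra hcon
        push_neg at hcon
        obtain ⟨h1, h2⟩ := hcon
        rcases h1 with h1 | h1 <;> rcases h2 with h2 | h2
        · exact hij (h1.symm.trans h2)
        · exact hmatch ⟨h1.symm, h2.symm⟩
        · rw [h1, h2] at hlk
          exact absurd (hji.trans hlk) (lt_irrefl _)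
        · exact hij (h1.symm.trans h2)
      refine Finset.sum_eq_zero fun g _ => Finset.sum_eq_zero fun h _ => ?_
      rw [(aux_quad ν i j k l hij hkl (hmemW g) (hmemW h)).2]
      rcases hex with ht | ht
      · rw [Finset.prod_eq_zero (Finset.mem_univ i)
          (by rw [if_pos (Or.inl rfl), if_neg ht, hW1 g]), mul_zero]
      · rw [Finset.prod_eq_zero (Finset.mem_univ j)
          (by rw [if_pos (Or.inr rfl), if_neg ht, hW1 g]), mul_zero]
  -- the squared sum
  have hT4int : ∀ i j k l : Fin N, Integrable
      (fun z => (if j < i then V i j z else 0) * (if l < k then V k l z else 0)) PP := by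
    intro i j k l
    by_cases h1 : j < i
    · by_cases h2 : l < k
      · simp only [if_pos h1, if_pos h2]
        exact hVVint i j k l h1.ne' h2.ne'
      · simp only [if_neg h2, mul_zero]
        exact integrable_const 0
    · simp only [if_neg h1, zero_mul]
      exact integrable_const 0
  have hF2 : ∀ z, F z ^ 2 = (1 / (N : ℝ)) ^ 2 * ∑ i, ∑ j, ∑ k, ∑ l,
      ((if j < i then V i j z else 0) * (if l < k then V k l z else 0)) := by
    intro z
    rw [hFdef]
    simp only
    rw [mul_pow, pow_two (∑ i, ∑ j, if j < i then V i j z else 0)]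
    congr 1
    rw [Finset.sum_mul]
    refine Finset.sum_congr rfl fun i _ => ?_
    rw [Finset.sum_mul]
    refine Finset.sum_congr rfl fun j _ => ?_
    rw [Finset.mul_sum]
    refine Finset.sum_congr rfl fun k _ => ?_
    rw [Finset.mul_sum]
  have hF2int : Integrable (fun z => F z ^ 2) PP := by
    have hInt0 : Integrable (fun z : Fin N → ℝ × ℝ => (1 / (N : ℝ)) ^ 2 * ∑ i, ∑ j, ∑ k, ∑ l,
        ((if j < i then V i j z else 0) * (if l < k then V k l z else 0))) PP :=
      (integrable_finset_sum _ fun i _ => integrable_finset_sum _ fun j _ =>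
        integrable_finset_sum _ fun k _ => integrable_finset_sum _ fun l _ =>
          hT4int i j k l).const_mul _
    exact hInt0.congr (Filter.Eventually.of_forall fun z => (hF2 z).symm)
  have hTT : ∀ i j k l : Fin N,
      ∫ z, (if j < i then V i j z else 0) * (if l < k then V k l z else 0) ∂PP
        = if (i = k ∧ j = l) ∧ j < i then C else 0 := by
    intro i j k l
    by_cases h1 : j < i
    · by_cases h2 : l < k
      · simp only [if_pos h1, if_pos h2]
        rw [hVVval i j k l h1 h2]
        by_cases hm : i = k ∧ j = l <;> simp [hm, h1, h2]
      · simp only [if_neg h2, mul_zero, integral_zero]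
        rw [if_neg]
        rintro ⟨⟨rfl, rfl⟩, hh⟩
        exact h2 hh
    · simp only [if_neg h1, zero_mul, integral_zero]
      rw [if_neg]
      rintro ⟨-, hh⟩
      exact h1 hh
  -- evaluating the quadruple sum
  have hsum4 : (∑ i : Fin N, ∑ j : Fin N, ∑ k : Fin N, ∑ l : Fin N,
      if (i = k ∧ j = l) ∧ j < i then C else 0)
        = ((N : ℝ) * ((N : ℝ) - 1) / 2) * C := by
    have hl : ∀ i j k : Fin N, (∑ l : Fin N, if (i = k ∧ j = l) ∧ j < i then C else 0)
        = if i = k ∧ j < i then C else 0 := by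
      intro i j k
      have : ∀ l : Fin N, (if (i = k ∧ j = l) ∧ j < i then C else 0)
          = if j = l then (if i = k ∧ j < i then C else 0) else 0 := by
        intro l
        rcases eq_or_ne j l with rfl | e
        · simp
        · simp [e]
      rw [Finset.sum_congr rfl fun l _ => this l, Finset.sum_ite_eq]
      simp
    have hk : ∀ i j : Fin N, (∑ k : Fin N, if i = k ∧ j < i then C else 0)
        = if j < i then C else 0 := by
      intro i j
      have : ∀ k : Fin N, (if i = k ∧ j < i then C else 0)
          = if i = k then (if j < i then C else 0) else 0 := by
        intro k
        rcases eq_or_ne i k with rfl | e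
        · simp
        · simp [e]
      rw [Finset.sum_congr rfl fun k _ => this k, Finset.sum_ite_eq]
      simp
    have hcnt : ∀ i : Fin N, (∑ j : Fin N, if j < i then C else 0) = ((i : ℕ) : ℝ) * C := by
      intro i
      rw [Finset.sum_ite, Finset.sum_const_zero, add_zero, Finset.sum_const]
      have hfil : Finset.univ.filter (fun j => j < i) = Finset.Iio i := by
        ext m; simp
      rw [hfil, Fin.card_Iio, nsmul_eq_mul]
    calc (∑ i : Fin N, ∑ j : Fin N, ∑ k : Fin N, ∑ l : Fin N,
        if (i = k ∧ j = l) ∧ j < i then C else 0)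
        = ∑ i : Fin N, ∑ j : Fin N, (if j < i then C else 0) := by
          refine Finset.sum_congr rfl fun i _ => Finset.sum_congr rfl fun j _ => ?_
          rw [Finset.sum_congr rfl fun k _ => hl i j k, hk i j]
      _ = ∑ i : Fin N, ((i : ℕ) : ℝ) * C := Finset.sum_congr rfl fun i _ => hcnt i
      _ = (∑ i : Fin N, ((i : ℕ) : ℝ)) * C := by rw [Finset.sum_mul]
      _ = ((N : ℝ) * ((N : ℝ) - 1) / 2) * C := by
          congr 1
          have h1 : (∑ i : Fin N, (i : ℕ)) = ∑ r ∈ Finset.range N, r :=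
            Fin.sum_univ_eq_sum_range (fun r => r) N
          have h2 : (∑ r ∈ Finset.range N, r) * 2 = N * (N - 1) :=
            Finset.sum_range_id_mul_two N
          have h3 : (∑ i : Fin N, ((i : ℕ) : ℝ)) = ((∑ i : Fin N, (i : ℕ) : ℕ) : ℝ) := by
            rw [Nat.cast_sum]
          rw [h3, h1]
          have h4 : (((∑ r ∈ Finset.range N, r) * 2 : ℕ) : ℝ) = ((N * (N - 1) : ℕ) : ℝ) := by
            rw [h2]
          push_cast [Nat.cast_sub hN] at h4 ⊢
          linarith
  -- second moment of S
  have hS2 : ∫ ω, S ω ^ 2 ∂ℙ = (1 / (N : ℝ)) ^ 2 * (((N : ℝ) * ((N : ℝ) - 1) / 2) * C) := by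
    calc ∫ ω, S ω ^ 2 ∂ℙ = ∫ ω, F (Φ ω) ^ 2 ∂ℙ := by
          refine integral_congr_ae (.of_forall fun ω => ?_)
          show S ω ^ 2 = F (Φ ω) ^ 2
          rw [hSF ω]
      _ = ∫ z, F z ^ 2 ∂PP := htrans (fun z => F z ^ 2) (hFmeas.pow_const 2)
      _ = ∫ z, ((1 / (N : ℝ)) ^ 2 * ∑ i, ∑ j, ∑ k, ∑ l,
            ((if j < i then V i j z else 0) * (if l < k then V k l z else 0))) ∂PP := by
          simp_rw [hF2]
      _ = (1 / (N : ℝ)) ^ 2 * ∑ i, ∑ j, ∑ k, ∑ l,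
            ∫ z, ((if j < i then V i j z else 0) * (if l < k then V k l z else 0)) ∂PP := by
          rw [integral_const_mul]
          congr 1
          rw [integral_finset_sum _ fun i _ => integrable_finset_sum _ fun j _ =>
            integrable_finset_sum _ fun k _ => integrable_finset_sum _ fun l _ => hT4int i j k l]
          refine Finset.sum_congr rfl fun i _ => ?_
          rw [integral_finset_sum _ fun j _ => integrable_finset_sum _ fun k _ =>
            integrable_finset_sum _ fun l _ => hT4int i j k l]
          refine Finset.sum_congr rfl fun j _ => ?_
          rw [integral_finset_sum _ fun k _ => integrable_finset_sum _ fun l _ => hT4int i j k l]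
          refine Finset.sum_congr rfl fun k _ => ?_
          rw [integral_finset_sum _ fun l _ => hT4int i j k l]
      _ = (1 / (N : ℝ)) ^ 2 * (((N : ℝ) * ((N : ℝ) - 1) / 2) * C) := by
          rw [Finset.sum_congr rfl fun i _ => Finset.sum_congr rfl fun j _ =>
            Finset.sum_congr rfl fun k _ => Finset.sum_congr rfl fun l _ => hTT i j k l, hsum4]
  -- S is in L²
  have hMS : MemLp S 2 ℙ := by
    have hFL2 : MemLp F 2 PP :=
      (memLp_two_iff_integrable_sq hFmeas.aestronglyMeasurable).2 hF2int
    have : MemLp F 2 (Measure.map Φ ℙ) := by rw [hlaw]; exact hFL2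
    have hcomp := (memLp_map_measure_iff hFmeas.aestronglyMeasurable hΦ.aemeasurable).1 this
    exact hcomp.ae_eq (Filter.Eventually.of_forall fun ω => (hSF ω).symm)
  -- conclusion
  refine ⟨hmean, ?_⟩
  have hvar := variance_eq_sub hMS
  have hNne : (N : ℝ) ≠ 0 := Nat.cast_ne_zero.2 hN.ne'
  have hP1 : (ℙ : Measure Ω)[S ^ 2] = ∫ ω, S ω ^ 2 ∂ℙ := by
    refine integral_congr_ae (.of_forall fun ω => ?_)
    simp [Pi.pow_apply]
  have hP2 : (ℙ : Measure Ω)[S] = 0 := hmean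
  rw [hvar, hP1, hP2, hS2]
  rw [hCdef]
  have hsumeq : (∑ g, (a g) ^ 2 * (π g * σsq g) ^ 2)
      = ∑ g, (a g) ^ 2 * (π g) ^ 2 * (σsq g) ^ 2 := by
    refine Finset.sum_congr rfl fun g _ => ?_
    ring
  rw [hsumeq]
  field_simp
  ring
end

section
/- Let x_1, …, x_n ∈ [0, ∞), let w_1, …, w_n be real weights with Σ_{i=1}^n w_i = 1 and Σ_{i=1}^n w_i x_i = 0, and let μ: [0, ∞) → ℝ be twice differentiable with second derivative μ'' integrable on [0, max_i x_i]. Then Σ_{i=1}^n w_i μ(x_i) − μ(0) = ∫_0^∞ μ''(s) · w̄(s) ds, where w̄(s) = Σ_{i : x_i ≥ s} w_i (x_i − s) (note w̄(s) = 0 for s > max_i x_i, so the integral is over a bounded interval). -/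
open MeasureTheory Finset

/-- Integral representation of the bias of a linear estimator with normalized weights
(proof of Proposition 1 of the paper): the bias equals the integral of the second
derivative against the partial weighted moment function w̄. -/
theorem bias_integral_representation
    (n : ℕ) (hn : 0 < n) (x w : Fin n → ℝ)
    (hx : ∀ i, 0 ≤ x i) (hw1 : ∑ i, w i = 1) (hwx : ∑ i, w i * x i = 0)
    (μ μ' μ'' : ℝ → ℝ)
    (hd1 : ∀ s ∈ Set.Ici (0:ℝ), HasDerivWithinAt μ (μ' s) (Set.Ici 0) s)
    (hd2 : ∀ s ∈ Set.Ici (0:ℝ), HasDerivWithinAt μ' (μ'' s) (Set.Ici 0) s)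
    (hint : IntegrableOn μ''
      (Set.Icc 0 (Finset.univ.sup' (Finset.univ_nonempty_iff.mpr ⟨⟨0, hn⟩⟩) x))) :
    ∑ i, w i * μ (x i) - μ 0
      = ∫ s in Set.Ioi (0:ℝ),
          μ'' s * ∑ i ∈ Finset.univ.filter (fun i => s ≤ x i), w i * (x i - s) := by
  set M := Finset.univ.sup' (Finset.univ_nonempty_iff.mpr ⟨⟨0, hn⟩⟩) x with hM
  have hxM : ∀ i, x i ≤ M := fun i => Finset.le_sup' x (Finset.mem_univ i)
  -- integrability of s ↦ μ'' s * (x i - s) on Icc 0 M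
  have hA : ∀ i, IntegrableOn (fun s => μ'' s * (x i - s)) (Set.Icc 0 M) := by
    intro i
    exact hint.mul_continuousOn
      (Continuous.continuousOn (by continuity)) isCompact_Icc
  have hA' : ∀ i, IntegrableOn (fun s => μ'' s * (x i - s)) (Set.Ioc 0 (x i)) := by
    intro i
    exact (hA i).mono_set (Set.Ioc_subset_Icc_self.trans
      (Set.Icc_subset_Icc le_rfl (hxM i)))
  -- Taylor with integral remainder
  have key : ∀ i, μ (x i) - μ 0 - μ' 0 * x i
      = ∫ s in Set.Ioc (0:ℝ) (x i), μ'' s * (x i - s) := by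
    intro i
    have hxi := hx i
    have hFTC : ∫ s in (0:ℝ)..(x i), μ'' s * (x i - s)
        = (μ (x i) + μ' (x i) * (x i - x i)) - (μ 0 + μ' 0 * (x i - 0)) := by
      apply intervalIntegral.integral_eq_sub_of_hasDeriv_right_of_le (f := fun t => μ t + μ' t * (x i - t)) (f' := fun s => μ'' s * (x i - s)) hxi
      · -- continuity of f s = μ s + μ' s * (x i - s)
        have hcμ : ContinuousOn μ (Set.Icc 0 (x i)) := fun s hs =>
          ((hd1 s hs.1).continuousWithinAt).mono (fun t ht => ht.1)
        have hcμ' : ContinuousOn μ' (Set.Icc 0 (x i)) := fun s hs =>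
          ((hd2 s hs.1).continuousWithinAt).mono (fun t ht => ht.1)
        exact hcμ.add (hcμ'.mul ((continuous_const.sub continuous_id).continuousOn))
      · intro s hs
        have hs0 : (0:ℝ) < s := hs.1
        have hmem : Set.Ici (0:ℝ) ∈ nhds s := Ici_mem_nhds hs0
        have h1 : HasDerivAt μ (μ' s) s := (hd1 s (le_of_lt hs0)).hasDerivAt hmem
        have h2 : HasDerivAt μ' (μ'' s) s := (hd2 s (le_of_lt hs0)).hasDerivAt hmem
        have h3 : HasDerivAt (fun t => x i - t) (-1) s := by
          simpa using (hasDerivAt_id s).const_sub (x i)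
        have h4 : HasDerivAt (fun t => μ t + μ' t * (x i - t))
            (μ' s + (μ'' s * (x i - s) + μ' s * (-1))) s := h1.add (h2.mul h3)
        have h5 : μ' s + (μ'' s * (x i - s) + μ' s * (-1)) = μ'' s * (x i - s) := by ring
        rw [h5] at h4
        exact h4.hasDerivWithinAt
      · have : Set.uIcc (0:ℝ) (x i) = Set.Icc 0 (x i) := Set.uIcc_of_le hxi
        exact ((hA i).mono_set (this ▸ Set.Icc_subset_Icc le_rfl (hxM i))).intervalIntegrable
    rw [intervalIntegral.integral_of_le hxi] at hFTC
    rw [hFTC]; ring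
  -- rewrite Ioc integral as Ioi integral of indicator
  have key2 : ∀ i, μ (x i) - μ 0 - μ' 0 * x i
      = ∫ s in Set.Ioi (0:ℝ),
          (Set.Ioc (0:ℝ) (x i)).indicator (fun s => μ'' s * (x i - s)) s := by
    intro i
    rw [key i, setIntegral_indicator measurableSet_Ioc,
      Set.inter_eq_right.mpr Set.Ioc_subset_Ioi_self]
  -- integrability of each indicator term on Ioi 0
  have hBint : ∀ i, Integrable
      ((Set.Ioc (0:ℝ) (x i)).indicator (fun s => μ'' s * (x i - s)))
      (volume.restrict (Set.Ioi (0:ℝ))) := by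
    intro i
    exact ((hA' i).integrable_indicator measurableSet_Ioc).integrableOn
  -- pointwise identity for the RHS integrand on Ioi 0
  have hpt : ∀ s ∈ Set.Ioi (0:ℝ),
      μ'' s * ∑ i ∈ Finset.univ.filter (fun i => s ≤ x i), w i * (x i - s)
      = ∑ i, w i * (Set.Ioc (0:ℝ) (x i)).indicator (fun s => μ'' s * (x i - s)) s := by
    intro s hs
    rw [Finset.mul_sum, Finset.sum_filter]
    apply Finset.sum_congr rfl
    intro i _
    by_cases h : s ≤ x i
    · rw [if_pos h, Set.indicator_of_mem (Set.mem_Ioc.mpr ⟨hs, h⟩)]; ring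
    · rw [if_neg h, Set.indicator_of_notMem (fun hc => h (Set.mem_Ioc.mp hc).2)]; ring
  -- combine
  calc ∑ i, w i * μ (x i) - μ 0
      = ∑ i, w i * (μ (x i) - μ 0 - μ' 0 * x i) := by
        simp only [mul_sub]
        rw [Finset.sum_sub_distrib, Finset.sum_sub_distrib, ← Finset.sum_mul, hw1]
        have : ∑ i, w i * (μ' 0 * x i) = μ' 0 * ∑ i, w i * x i := by
          rw [Finset.mul_sum]; apply Finset.sum_congr rfl; intro i _; ring
        rw [this, hwx]; ring
    _ = ∑ i, w i * ∫ s in Set.Ioi (0:ℝ),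
          (Set.Ioc (0:ℝ) (x i)).indicator (fun s => μ'' s * (x i - s)) s := by
        apply Finset.sum_congr rfl; intro i _; rw [key2 i]
    _ = ∑ i, ∫ s in Set.Ioi (0:ℝ),
          w i * (Set.Ioc (0:ℝ) (x i)).indicator (fun s => μ'' s * (x i - s)) s := by
        apply Finset.sum_congr rfl; intro i _
        rw [MeasureTheory.integral_const_mul]
    _ = ∫ s in Set.Ioi (0:ℝ), ∑ i,
          w i * (Set.Ioc (0:ℝ) (x i)).indicator (fun s => μ'' s * (x i - s)) s := by
        rw [MeasureTheory.integral_finset_sum]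
        intro i _
        exact (hBint i).const_mul (w i)
    _ = ∫ s in Set.Ioi (0:ℝ),
          μ'' s * ∑ i ∈ Finset.univ.filter (fun i => s ≤ x i), w i * (x i - s) := by
        apply setIntegral_congr_fun measurableSet_Ioi
        intro s hs
        exact (hpt s hs).symm
end

section
/- Let x_1, …, x_n ∈ [0, ∞) and let w_1, …, w_n be real weights with Σ_{i=1}^n w_i = 1 and Σ_{i=1}^n w_i x_i = 0. Suppose that w̄(s) = Σ_{i : x_i ≥ s} w_i (x_i − s) ≤ 0 for all s ≥ 0. Then for every C ≥ 0 and every differentiable μ: [0, ∞) → ℝ whose derivative μ' is Lipschitz with constant C (i.e. |μ'(a) − μ'(b)| ≤ C|a − b| for all a, b ≥ 0), one has |Σ_{i=1}^n w_i μ(x_i) − μ(0)| ≤ −(C/2) Σ_{i=1}^n w_i x_i². Moreover, the bound is attained: for μ*(x) = −C x²/2, Σ_{i=1}^n w_i μ*(x_i) − μ*(0) = −(C/2) Σ_{i=1}^n w_i x_i² ≥ 0. -/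
open Finset Set

lemma holder_core_aux :
    ∀ k : ℕ, ∀ (H H' : ℝ → ℝ),
      (∀ t ∈ Set.Ici (0:ℝ), HasDerivWithinAt H (H' t) (Set.Ici 0) t) →
      (∀ a b : ℝ, 0 ≤ a → a ≤ b → H' b ≤ H' a) →
      H 0 = 0 → H' 0 ≤ 0 →
      ∀ (n : ℕ) (x w : Fin n → ℝ), (∀ i, 0 ≤ x i) →
      (∀ s ≥ (0:ℝ), ∑ i, w i * max (x i - s) 0 ≤ 0) →
      ((Finset.univ.filter (fun i => 0 < x i)).image x).card ≤ k →
      0 ≤ ∑ i, w i * H (x i) := by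
  intro k
  induction k with
  | zero =>
    intro H H' hH hanti hH0 hH'0 n x w hx hB hcard
    have hS : (Finset.univ.filter (fun i => 0 < x i)).image x = ∅ :=
      Finset.card_eq_zero.mp (Nat.le_zero.mp hcard)
    have hx0 : ∀ i, x i = 0 := by
      intro i
      by_contra h
      have hpos : 0 < x i := lt_of_le_of_ne (hx i) (Ne.symm h)
      have : x i ∈ (Finset.univ.filter (fun i => 0 < x i)).image x :=
        Finset.mem_image.mpr ⟨i, Finset.mem_filter.mpr ⟨Finset.mem_univ i, hpos⟩, rfl⟩
      simp [hS] at this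
    have hz : ∑ i, w i * H (x i) = 0 :=
      Finset.sum_eq_zero (fun i _ => by rw [hx0 i, hH0, mul_zero])
    linarith
  | succ k ih =>
    intro H H' hH hanti hH0 hH'0 n x w hx hB hcard
    set S := (Finset.univ.filter (fun i => 0 < x i)).image x with hSdef
    by_cases hk : S.card ≤ k
    · exact ih H H' hH hanti hH0 hH'0 n x w hx hB hk
    have hSne : S.Nonempty := Finset.card_pos.mp (by omega)
    set s₁ := S.min' hSne with hs₁def
    have hs₁S : s₁ ∈ S := S.min'_mem hSne
    have hs₁pos : 0 < s₁ := by
      obtain ⟨i, hi, hxi⟩ := Finset.mem_image.mp hs₁S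
      exact hxi ▸ (Finset.mem_filter.mp hi).2
    have hge : ∀ i, 0 < x i → s₁ ≤ x i := fun i hi =>
      S.min'_le _ (Finset.mem_image.mpr ⟨i, Finset.mem_filter.mpr ⟨Finset.mem_univ i, hi⟩, rfl⟩)
    set d := H s₁ / s₁ with hddef
    have hcont : ContinuousOn H (Set.Ici 0) := fun t ht => (hH t ht).continuousWithinAt
    have hHanti : AntitoneOn H (Set.Ici 0) := by
      refine antitoneOn_of_deriv_nonpos (convex_Ici 0) hcont (fun t ht => ?_) (fun t ht => ?_) <;>
        rw [interior_Ici] at ht <;>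
        have hda : HasDerivAt H (H' t) t := (hH t (Set.mem_Ici.mpr (le_of_lt ht))).hasDerivAt (Ici_mem_nhds ht)
      · exact (hda.differentiableAt.differentiableWithinAt)
      · rw [hda.deriv]
        exact le_trans (hanti 0 t le_rfl (le_of_lt ht)) hH'0
    have hHs₁ : H s₁ ≤ 0 :=
      hH0 ▸ hHanti Set.self_mem_Ici (Set.mem_Ici.mpr hs₁pos.le) hs₁pos.le
    have hd0 : d ≤ 0 := div_nonpos_of_nonpos_of_nonneg hHs₁ hs₁pos.le
    obtain ⟨ξ, hξ, hξeq⟩ := exists_hasDerivAt_eq_slope H H' hs₁pos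
      (hcont.mono Set.Icc_subset_Ici_self)
      (fun t ht => (hH t ht.1.le).hasDerivAt (Ici_mem_nhds ht.1))
    have hξd : H' ξ = d := by rw [hξeq, hH0, hddef]; ring
    have hHs₁' : H' s₁ ≤ d := hξd ▸ hanti ξ s₁ hξ.1.le hξ.2.le
    -- shifted function
    set K : ℝ → ℝ := fun t => H (t + s₁) - d * (t + s₁) with hKdef
    set K' : ℝ → ℝ := fun t => H' (t + s₁) - d with hK'def
    have hK : ∀ t ∈ Set.Ici (0:ℝ), HasDerivWithinAt K (K' t) (Set.Ici 0) t := by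
      intro t ht
      have hmem : t + s₁ ∈ Set.Ici (0:ℝ) := by
        simp only [Set.mem_Ici] at ht ⊢; linarith
      have h1 : HasDerivWithinAt (fun u : ℝ => u + s₁) 1 (Set.Ici 0) t := by
        simpa using (hasDerivWithinAt_id t (Set.Ici 0)).add_const s₁
      have h2 : HasDerivWithinAt (fun u : ℝ => H (u + s₁)) (H' (t + s₁) * 1) (Set.Ici 0) t :=
        (hH (t + s₁) hmem).comp t h1 (fun u hu => by
          simp only [Set.mem_Ici] at hu ⊢; linarith)
      have h3 : HasDerivWithinAt (fun u : ℝ => d * (u + s₁)) (d * 1) (Set.Ici 0) t :=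
        h1.const_mul d
      exact (h2.sub h3).congr_deriv (by simp [hK'def])
    have hKanti : ∀ a b : ℝ, 0 ≤ a → a ≤ b → K' b ≤ K' a := by
      intro a b ha hab
      simp only [hK'def]
      have := hanti (a + s₁) (b + s₁) (by linarith) (by linarith)
      linarith
    have hK0 : K 0 = 0 := by
      simp only [hKdef, zero_add, hddef]
      field_simp
      ring
    have hK'0 : K' 0 ≤ 0 := by
      simp only [hK'def, zero_add]
      linarith
    -- new configuration
    set x' : Fin n → ℝ := fun i => max (x i - s₁) 0 with hx'def
    have hx' : ∀ i, 0 ≤ x' i := fun i => le_max_right _ _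
    have hB' : ∀ s ≥ (0:ℝ), ∑ i, w i * max (x' i - s) 0 ≤ 0 := by
      intro s hs
      have key : ∀ i, max (x' i - s) 0 = max (x i - (s + s₁)) 0 := by
        intro i
        simp only [hx'def]
        rcases le_or_gt (x i - s₁) 0 with h | h
        · rw [max_eq_right h, max_eq_right (by linarith), max_eq_right (by linarith)]
        · rw [max_eq_left h.le]
          congr 1
          ring
      calc ∑ i, w i * max (x' i - s) 0 = ∑ i, w i * max (x i - (s + s₁)) 0 :=
            Finset.sum_congr rfl (fun i _ => by rw [key i])
        _ ≤ 0 := hB (s + s₁) (by linarith)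
    have hcard' : ((Finset.univ.filter (fun i => 0 < x' i)).image x').card ≤ k := by
      have hsub : (Finset.univ.filter (fun i => 0 < x' i)).image x' ⊆
          (S.erase s₁).image (fun v => v - s₁) := by
        intro v hv
        obtain ⟨i, hi, hvi⟩ := Finset.mem_image.mp hv
        have hpos : 0 < x' i := (Finset.mem_filter.mp hi).2
        have hgt : s₁ < x i := by
          by_contra hle
          push_neg at hle
          have : x' i = 0 := max_eq_right (by linarith)
          rw [this] at hpos; exact lt_irrefl 0 hpos
        have hxiS : x i ∈ S := Finset.mem_image.mpr
          ⟨i, Finset.mem_filter.mpr ⟨Finset.mem_univ i, lt_trans hs₁pos hgt⟩, rfl⟩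
        refine Finset.mem_image.mpr ⟨x i, Finset.mem_erase.mpr ⟨ne_of_gt hgt, hxiS⟩, ?_⟩
        rw [← hvi]
        exact (max_eq_left (by linarith)).symm
      calc ((Finset.univ.filter (fun i => 0 < x' i)).image x').card
          ≤ ((S.erase s₁).image (fun v => v - s₁)).card := Finset.card_le_card hsub
        _ ≤ (S.erase s₁).card := Finset.card_image_le
        _ = S.card - 1 := Finset.card_erase_of_mem hs₁S
        _ ≤ k := by omega
    have hIH := ih K K' hK hKanti hK0 hK'0 n x' w hx' hB' hcard'
    -- sum identity
    have hpoint : ∀ i, H (x i) = K (x' i) + d * max (x i - 0) 0 := by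
      intro i
      rcases eq_or_lt_of_le (hx i) with h | h
      · rw [← h]
        simp only [hx'def]
        rw [max_eq_right (by linarith), max_eq_right (by norm_num), hK0, hH0]
        ring
      · have hges := hge i h
        simp only [hx'def, hKdef]
        rw [max_eq_left (by linarith), max_eq_left (by linarith)]
        have : x i - s₁ + s₁ = x i := by ring
        rw [this]
        ring
    have hsumid : ∑ i, w i * H (x i)
        = ∑ i, w i * K (x' i) + d * ∑ i, w i * max (x i - 0) 0 := by
      rw [Finset.mul_sum, ← Finset.sum_add_distrib]
      exact Finset.sum_congr rfl (fun i _ => by rw [hpoint i]; ring)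
    have hB0 := hB 0 le_rfl
    nlinarith [mul_nonneg (neg_nonneg.mpr hd0) (neg_nonneg.mpr hB0)]

lemma holder_side (n : ℕ) (x w : Fin n → ℝ) (hx : ∀ i, 0 ≤ x i)
    (hB : ∀ s ≥ (0:ℝ), ∑ i, w i * max (x i - s) 0 ≤ 0)
    (C : ℝ) (hC : 0 ≤ C) (μ μ' : ℝ → ℝ)
    (hd : ∀ s ∈ Set.Ici (0:ℝ), HasDerivWithinAt μ (μ' s) (Set.Ici 0) s)
    (hlip : ∀ a b : ℝ, 0 ≤ a → 0 ≤ b → |μ' a - μ' b| ≤ C * |a - b|)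
    (ε : ℝ) (hε : ε = 1 ∨ ε = -1) :
    0 ≤ ∑ i, w i * (-C * (x i)^2/2 + ε * (μ (x i) - μ 0 - μ' 0 * x i)) := by
  set H : ℝ → ℝ := fun t => -C * t^2/2 + ε * (μ t - μ 0 - μ' 0 * t) with hHdef
  set H' : ℝ → ℝ := fun t => -C * t + ε * (μ' t - μ' 0) with hH'def
  have hεabs : |ε| = 1 := by rcases hε with h | h <;> rw [h] <;> norm_num
  have hH : ∀ t ∈ Set.Ici (0:ℝ), HasDerivWithinAt H (H' t) (Set.Ici 0) t := by
    intro t ht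
    have h1 : HasDerivWithinAt (fun u : ℝ => -C * u^2/2) (-C * (2 * t^1) / 2) (Set.Ici 0) t :=
      (((hasDerivAt_pow 2 t).const_mul (-C)).div_const 2).hasDerivWithinAt
    have h2 : HasDerivWithinAt (fun u : ℝ => μ' 0 * u) (μ' 0 * 1) (Set.Ici 0) t :=
      (hasDerivWithinAt_id t (Set.Ici 0)).const_mul (μ' 0)
    have h3 : HasDerivWithinAt (fun u : ℝ => μ u - μ 0 - μ' 0 * u) (μ' t - μ' 0 * 1)
        (Set.Ici 0) t := ((hd t ht).sub_const (μ 0)).sub h2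
    have h4 : HasDerivWithinAt (fun u : ℝ => ε * (μ u - μ 0 - μ' 0 * u))
        (ε * (μ' t - μ' 0 * 1)) (Set.Ici 0) t := h3.const_mul ε
    have h5 := h1.add h4
    exact h5.congr_deriv (by simp only [hH'def]; ring)
  have hanti : ∀ a b : ℝ, 0 ≤ a → a ≤ b → H' b ≤ H' a := by
    intro a b ha hab
    have h := hlip b a (le_trans ha hab) ha
    rw [abs_of_nonneg (by linarith : (0:ℝ) ≤ b - a)] at h
    have h2 := abs_le.mp h
    simp only [hH'def]
    rcases hε with h' | h' <;> subst h' <;> · simp only [one_mul, neg_one_mul] <;> linarith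
  have hH0 : H 0 = 0 := by simp only [hHdef]; ring
  have hH'0 : H' 0 ≤ 0 := by simp only [hH'def]; nlinarith
  exact holder_core_aux ((Finset.univ.filter (fun i => 0 < x i)).image x).card H H'
    hH hanti hH0 hH'0 n x w hx hB le_rfl

/-- One-sided worst-case bias bound over the second-order Hölder class M_H(C)
underlying the honest confidence interval of Proposition 1 of the paper; the bound is
attained by the quadratic μ*(x) = −Cx²/2 and is nonnegative. -/
theorem holder_worst_case_bias_bound
    (n : ℕ) (x w : Fin n → ℝ)
    (hx : ∀ i, 0 ≤ x i) (hw1 : ∑ i, w i = 1) (hwx : ∑ i, w i * x i = 0)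
    (hwbar : ∀ s ≥ (0:ℝ),
      ∑ i ∈ Finset.univ.filter (fun i => s ≤ x i), w i * (x i - s) ≤ 0)
    (C : ℝ) (hC : 0 ≤ C) (μ μ' : ℝ → ℝ)
    (hd : ∀ s ∈ Set.Ici (0:ℝ), HasDerivWithinAt μ (μ' s) (Set.Ici 0) s)
    (hlip : ∀ a b : ℝ, 0 ≤ a → 0 ≤ b → |μ' a - μ' b| ≤ C * |a - b|) :
    |∑ i, w i * μ (x i) - μ 0| ≤ -(C / 2) * ∑ i, w i * (x i) ^ 2 ∧
    (∑ i, w i * (-C * (x i) ^ 2 / 2) - (-C * (0:ℝ) ^ 2 / 2)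
        = -(C / 2) * ∑ i, w i * (x i) ^ 2 ∧
      0 ≤ -(C / 2) * ∑ i, w i * (x i) ^ 2) := by
  -- convert hwbar to max form
  have hB : ∀ s ≥ (0:ℝ), ∑ i, w i * max (x i - s) 0 ≤ 0 := by
    intro s hs
    have heq : ∑ i, w i * max (x i - s) 0
        = ∑ i ∈ Finset.univ.filter (fun i => s ≤ x i), w i * (x i - s) := by
      rw [← Finset.sum_filter_add_sum_filter_not Finset.univ (fun i => s ≤ x i)
        (fun i => w i * max (x i - s) 0)]
      have h1 : ∑ i ∈ Finset.univ.filter (fun i => s ≤ x i), w i * max (x i - s) 0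
          = ∑ i ∈ Finset.univ.filter (fun i => s ≤ x i), w i * (x i - s) :=
        Finset.sum_congr rfl (fun i hi => by
          rw [max_eq_left (sub_nonneg.mpr (Finset.mem_filter.mp hi).2)])
      have h2 : ∑ i ∈ Finset.univ.filter (fun i => ¬ s ≤ x i), w i * max (x i - s) 0 = 0 :=
        Finset.sum_eq_zero (fun i hi => by
          have hlt : ¬ s ≤ x i := (Finset.mem_filter.mp hi).2
          push_neg at hlt
          rw [max_eq_right (by linarith), mul_zero])
      rw [h1, h2, add_zero]
    rw [heq]
    exact hwbar s hs
  -- expansion identity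
  have expand : ∀ ε : ℝ, ∑ i, w i * (-C * (x i)^2/2 + ε * (μ (x i) - μ 0 - μ' 0 * x i))
      = -(C/2) * (∑ i, w i * (x i)^2)
        + ε * ((∑ i, w i * μ (x i)) - μ 0 * (∑ i, w i) - μ' 0 * (∑ i, w i * x i)) := by
    intro ε
    simp only [Finset.mul_sum, mul_sub, mul_add]
    rw [← Finset.sum_sub_distrib, ← Finset.sum_sub_distrib, ← Finset.sum_add_distrib]
    exact Finset.sum_congr rfl (fun i _ => by ring)
  -- nonnegativity of the bound, via side with μ ≡ 0, C := 1
  have hV : ∑ i, w i * (x i)^2 ≤ 0 := by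
    have h0 := holder_side n x w hx hB 1 one_pos.le (fun _ => 0) (fun _ => 0)
      (fun s _ => hasDerivWithinAt_const s _ 0)
      (fun a b _ _ => by simp [abs_nonneg]) 1 (Or.inl rfl)
    have := expand  -- not used for this one
    have hexp : ∑ i, w i * (-1 * (x i)^2/2 + 1 * ((0:ℝ) - 0 - 0 * x i))
        = -(1/2) * ∑ i, w i * (x i)^2 := by
      rw [Finset.mul_sum]
      exact Finset.sum_congr rfl (fun i _ => by ring)
    rw [hexp] at h0
    linarith
  have hbound : 0 ≤ -(C / 2) * ∑ i, w i * (x i) ^ 2 := by nlinarith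
  -- upper bound: ε = -1
  have hup := holder_side n x w hx hB C hC μ μ' hd hlip (-1) (Or.inr rfl)
  rw [expand (-1)] at hup
  -- lower bound: ε = 1
  have hlo := holder_side n x w hx hB C hC μ μ' hd hlip 1 (Or.inl rfl)
  rw [expand 1] at hlo
  rw [hw1, hwx] at hup hlo
  refine ⟨abs_le.mpr ⟨by nlinarith, by nlinarith⟩, ?_, hbound⟩
  have heq2 : ∑ i, w i * (-C * (x i)^2/2) = -(C/2) * ∑ i, w i * (x i)^2 := by
    rw [Finset.mul_sum]
    exact Finset.sum_congr rfl (fun i _ => by ring)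
  rw [heq2]
  norm_num
end

section
/- Let x_1, …, x_n ∈ [0, ∞), let Q̂ = Σ_{i=1}^n (1, x_i)(1, x_i)ᵀ ∈ ℝ^{2×2} be invertible, and let w_i = e₁ᵀ Q̂⁻¹ (1, x_i)ᵀ be the implied intercept weights of the least-squares regression of an outcome on (1, x). Then for every s ≥ 0: Σ_{i : x_i ≥ s} w_i (x_i − s) ≤ 0. -/
open Matrix Finset

/-- Sign property of the partial weighted moments of the intercept weights of a
least-squares regression on (1, x) with nonnegative design points (key step in the
proof of Proposition 1 of the paper). -/
theorem local_linear_weights_partial_moment_nonpos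
    (n : ℕ) (x : Fin n → ℝ) (hx : ∀ i, 0 ≤ x i)
    (Qhat : Matrix (Fin 2) (Fin 2) ℝ)
    (hQhat : Qhat = ∑ i, vecMulVec ![1, x i] ![1, x i])
    (hQinv : IsUnit Qhat.det)
    (w : Fin n → ℝ)
    (hw : ∀ i, w i = ![1, 0] ⬝ᵥ (Qhat⁻¹ *ᵥ ![1, x i])) :
    ∀ s ≥ (0:ℝ), ∑ i ∈ Finset.univ.filter (fun i => s ≤ x i), w i * (x i - s) ≤ 0 := by
  intro s hs
  set Sx : ℝ := ∑ i, x i with hSx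
  set Sxx : ℝ := ∑ i, x i * x i with hSxx
  have hQ : Qhat = !![(n:ℝ), Sx; Sx, Sxx] := by
    rw [hQhat]
    ext i j
    fin_cases i <;> fin_cases j <;>
      simp [vecMulVec, Matrix.sum_apply, hSx, hSxx]
  have hd : Qhat.det = n * Sxx - Sx * Sx := by
    rw [hQ, Matrix.det_fin_two_of]
  -- w i formula
  have hwi : ∀ i, w i = (Sxx - Sx * x i) / Qhat.det := by
    intro i
    rw [hw i, Matrix.inv_def, hQ, Matrix.adjugate_fin_two]
    simp [Matrix.mulVec, dotProduct, Fin.sum_univ_two, Ring.inverse_eq_inv']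
    ring
  -- det positive
  have hdne : Qhat.det ≠ 0 := hQinv.ne_zero
  have hCS : Sx * Sx ≤ n * Sxx := by
    have h := Finset.sum_mul_sq_le_sq_mul_sq Finset.univ (fun _ : Fin n => (1:ℝ)) x
    simpa [hSx, hSxx, Finset.card_univ, mul_pow, pow_two] using h
  have hdpos : 0 < Qhat.det := by
    rcases lt_or_eq_of_le (by rw [hd]; linarith : (0:ℝ) ≤ Qhat.det) with h | h
    · exact h
    · exact absurd h.symm hdne
  -- the filtered set
  set T : Finset (Fin n) := Finset.univ.filter (fun i => s ≤ x i) with hT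
  set U : ℝ := ∑ i ∈ T, (x i - s) with hU
  set V : ℝ := ∑ i ∈ T, (x i - s) ^ 2 with hV
  have hUnn : 0 ≤ U := Finset.sum_nonneg fun i hi => by
    have := (Finset.mem_filter.mp hi).2; linarith
  have hVnn : 0 ≤ V := Finset.sum_nonneg fun i _ => sq_nonneg _
  -- U + s * card ≤ Sx
  have hm : U + s * T.card ≤ Sx := by
    have h1 : ∑ i ∈ T, x i ≤ Sx := by
      apply Finset.sum_le_sum_of_subset_of_nonneg (Finset.filter_subset _ _)
      intro i _ _; exact hx i
    have h2 : ∑ i ∈ T, x i = U + s * T.card := by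
      rw [hU, Finset.sum_sub_distrib, Finset.sum_const, nsmul_eq_mul]
      ring
    linarith
  -- Sxx - s*Sx ≤ V + s*U
  have h2 : Sxx - s * Sx ≤ V + s * U := by
    have hsplit : ∑ i, x i * (x i - s)
        = (∑ i ∈ T, x i * (x i - s)) + ∑ i ∈ Finset.univ.filter (fun i => ¬ s ≤ x i), x i * (x i - s) :=
      (Finset.sum_filter_add_sum_filter_not _ _ _).symm
    have hneg : ∑ i ∈ Finset.univ.filter (fun i => ¬ s ≤ x i), x i * (x i - s) ≤ 0 := by
      apply Finset.sum_nonpos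
      intro i hi
      have := (Finset.mem_filter.mp hi).2
      have hxi := hx i
      nlinarith [not_le.mp this]
    have hTeq : ∑ i ∈ T, x i * (x i - s) = V + s * U := by
      rw [hV, hU, Finset.mul_sum, ← Finset.sum_add_distrib]
      apply Finset.sum_congr rfl
      intro i _; ring
    have hall : ∑ i, x i * (x i - s) = Sxx - s * Sx := by
      rw [hSxx, hSx, Finset.mul_sum, ← Finset.sum_sub_distrib]
      apply Finset.sum_congr rfl
      intro i _; ring
    linarith [hsplit, hneg, hTeq, hall]
  -- Cauchy-Schwarz on T
  have h3 : U ^ 2 ≤ T.card * V := by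
    have h := Finset.sum_mul_sq_le_sq_mul_sq T (fun _ => (1:ℝ)) (fun i => x i - s)
    simpa [hU, hV, pow_two] using h
  -- key inequality on the numerator
  have hkey : (Sxx - s * Sx) * U - Sx * V ≤ 0 := by
    have e1 : (Sxx - s * Sx) * U ≤ (V + s * U) * U :=
      mul_le_mul_of_nonneg_right h2 hUnn
    have e2 : s * U ^ 2 ≤ s * (T.card * V) :=
      mul_le_mul_of_nonneg_left h3 hs
    have e3 : (U + s * T.card) * V ≤ Sx * V :=
      mul_le_mul_of_nonneg_right hm hVnn
    nlinarith [e1, e2, e3]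
  -- conclude
  have hterm : ∀ i ∈ T, w i * (x i - s)
      = ((Sxx - s * Sx) * (x i - s) - Sx * (x i - s) ^ 2) / Qhat.det := by
    intro i _
    rw [hwi i]
    field_simp
    ring
  rw [Finset.sum_congr rfl hterm, ← Finset.sum_div, Finset.sum_sub_distrib,
      ← Finset.mul_sum, ← Finset.mul_sum, ← hU, ← hV]
  exact div_nonpos_of_nonpos_of_nonneg hkey hdpos.le
end
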